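/- Assume (H1) and (H2) and let p, q ∈ [0,1]. If (S(t))_{t≥0} is the C₀-semigroup generated by A, then the semigroup is positive, i.e. S(t)X⁺ ⊆ X⁺ for every t ≥ 0. -/

import Mathlib

open MeasureTheory Set Filter Topology

noncomputable section

/-- `ℝ³` with the `ℓ¹` norm. -/
abbrev V3 : Type := PiLp 1 fun _ : Fin 3 => ℝ

/-- Lebesgue measure restricted to `[0,ω]`. -/
def muM (ω : ℝ) : Measure ℝ := volume.restrict (Icc (0:ℝ) ω)

/-- The state space `X = L¹([0,ω],ℝ³)` with norm `‖ψ‖₁ = ‖ψ₁‖₁+‖ψ₂‖₁+‖ψ₃‖₁`. -/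
abbrev XX (ω : ℝ) := Lp (α := ℝ) V3 1 (muM ω)

/-- The cone `X⁺` of a.e. componentwise nonnegative elements of `X`. -/
def Xpos (ω : ℝ) : Set (XX ω) :=
  {ψ | ∀ᵐ a ∂(muM ω), ∀ i : Fin 3, 0 ≤ ψ a i}

/-- `M` is the essential supremum of `|f|` on `[0,ω]`. -/
def IsEssSupOn (ω : ℝ) (f : ℝ → ℝ) (M : ℝ) : Prop :=
  (∀ᵐ a ∂(muM ω), |f a| ≤ M) ∧ ∀ C : ℝ, (∀ᵐ a ∂(muM ω), |f a| ≤ C) → M ≤ C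

/-- `m` is the essential infimum of `f` on `[0,ω]`. -/
def IsEssInfOn (ω : ℝ) (f : ℝ → ℝ) (m : ℝ) : Prop :=
  (∀ᵐ a ∂(muM ω), m ≤ f a) ∧ ∀ C : ℝ, (∀ᵐ a ∂(muM ω), C ≤ f a) → C ≤ m

/-- `M` is the essential supremum of `|k|` on `[0,ω]²`. -/
def IsEssSupSq (ω : ℝ) (k : ℝ → ℝ → ℝ) (M : ℝ) : Prop :=
  (∀ᵐ z ∂((muM ω).prod (muM ω)), |k z.1 z.2| ≤ M) ∧
    ∀ C : ℝ, (∀ᵐ z ∂((muM ω).prod (muM ω)), |k z.1 z.2| ≤ C) → M ≤ C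

/-- The nonlocal boundary operator `𝓑ψ = ∫₀^ω B(a)ψ(a)da`, where `B(a)` has rows
`(β,(1−p)β,(1−q)β)`, `(0,pβ,0)`, `(0,0,qβ)`. -/
def Bvec (ω p q : ℝ) (β : ℝ → ℝ) (g : ℝ → Fin 3 → ℝ) : Fin 3 → ℝ :=
  ![∫ a in Icc (0:ℝ) ω, β a * (g a 0 + (1 - p) * g a 1 + (1 - q) * g a 2),
    ∫ a in Icc (0:ℝ) ω, p * (β a * g a 1),
    ∫ a in Icc (0:ℝ) ω, q * (β a * g a 2)]

/-- `ψ ∈ D(A)`, witnessed by an a.e. representative `g` which is absolutely continuous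
on `[0,ω]` (a primitive of an integrable `g'`) componentwise, with `μg` integrable and
satisfying the nonlocal boundary condition `g(0) = 𝓑g`. -/
def InDomA (ω p q : ℝ) (β μf : ℝ → ℝ) (ψ : XX ω) (g g' : ℝ → Fin 3 → ℝ) : Prop :=
  (∀ᵐ a ∂(muM ω), ∀ i : Fin 3, ψ a i = g a i) ∧
  IntegrableOn g' (Icc 0 ω) ∧
  (∀ i : Fin 3, ∀ a ∈ Icc (0:ℝ) ω, g a i = g 0 i + ∫ s in (0:ℝ)..a, g' s i) ∧
  IntegrableOn (fun a => fun i => μf a * g a i) (Icc 0 ω) ∧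
  g 0 = Bvec ω p q β g

/-- Pointwise values of `Aψ = −ψ′ − μψ + 𝒢ψ`, where `𝒢(a)` has rows `(0,δ,0)`,
`(0,−(δ+γ),0)`, `(0,γ,0)`. -/
def Aval (γ δ μf : ℝ → ℝ) (g g' : ℝ → Fin 3 → ℝ) (a : ℝ) : Fin 3 → ℝ :=
  ![-g' a 0 - μf a * g a 0 + δ a * g a 1,
    -g' a 1 - μf a * g a 1 - (δ a + γ a) * g a 1,
    -g' a 2 - μf a * g a 2 + γ a * g a 1]

/-- `(S(t))_{t≥0}` is the `C₀`-semigroup generated by `A`: semigroup laws, strong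
continuity, and for every `x ∈ X` the limit `lim_{h→0⁺}(S(h)x−x)/h` exists iff
`x ∈ D(A)`, in which case the limit is (a.e.) given by `Ax = −x′ − μx + 𝒢x`. -/
def IsGenSemigroup (ω p q : ℝ) (β γ δ μf : ℝ → ℝ) (S : ℝ → XX ω →L[ℝ] XX ω) : Prop :=
  S 0 = 1 ∧
  (∀ s t : ℝ, 0 ≤ s → 0 ≤ t → S (t + s) = (S t).comp (S s)) ∧
  (∀ x : XX ω, ContinuousOn (fun t => S t x) (Ici 0)) ∧
  (∀ x : XX ω,
    (∃ y : XX ω, Tendsto (fun h : ℝ => h⁻¹ • (S h x - x)) (nhdsWithin 0 (Ioi 0)) (nhds y))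
      ↔ ∃ g g' : ℝ → Fin 3 → ℝ, InDomA ω p q β μf x g g') ∧
  (∀ x y : XX ω, ∀ g g' : ℝ → Fin 3 → ℝ, InDomA ω p q β μf x g g' →
    Tendsto (fun h : ℝ => h⁻¹ • (S h x - x)) (nhdsWithin 0 (Ioi 0)) (nhds y) →
    ∀ᵐ a ∂(muM ω), ∀ i : Fin 3, y a i = Aval γ δ μf g g' a i)

/-- A mild solution on `[0,T]` of `x′(t) = Ax(t) + F(t,x(t))`, `x(0) = x̂`. -/
def IsMildSol (ω T : ℝ) (S : ℝ → XX ω →L[ℝ] XX ω) (F : ℝ → XX ω → XX ω)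
    (xhat : XX ω) (x : ℝ → XX ω) : Prop :=
  ContinuousOn x (Icc 0 T) ∧ x 0 = xhat ∧
  ∀ t ∈ Icc (0:ℝ) T, x t = S t xhat + ∫ s in Icc (0:ℝ) t, S (t - s) (F s (x s))

/-- A classical solution on `[0,T]` of `x′(t) = Ax(t) + F(t,x(t))`: continuously
differentiable, with values in `D(A)` and satisfying the equation for `t ∈ (0,T)`. -/
def IsClassicalSol (ω T p q : ℝ) (β γ δ μf : ℝ → ℝ) (F : ℝ → XX ω → XX ω)
    (x : ℝ → XX ω) : Prop :=
  ∃ x' : ℝ → XX ω,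
    ContinuousOn x' (Icc 0 T) ∧
    (∀ t ∈ Icc (0:ℝ) T, HasDerivWithinAt x (x' t) (Icc 0 T) t) ∧
    ∀ t ∈ Ioo (0:ℝ) T, ∃ g g' : ℝ → Fin 3 → ℝ, InDomA ω p q β μf (x t) g g' ∧
      ∀ᵐ a ∂(muM ω), ∀ i : Fin 3,
        (x' t) a i = Aval γ δ μf g g' a i + (F t (x t)) a i

/-- The force of infection `Λ(a,ζ) = ∫₀^ω k(a,σ)ζ(σ)dσ`. -/
def Lam (ω : ℝ) (k : ℝ → ℝ → ℝ) (ζ : ℝ → ℝ) (a : ℝ) : ℝ :=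
  ∫ σ in Icc (0:ℝ) ω, k a σ * ζ σ

/-- Pointwise values of the nonlinearity `f(ψ)(a) = (−Λ(a,ψ₂)ψ₁(a), Λ(a,ψ₂)ψ₁(a), 0)`. -/
def fval (ω : ℝ) (k : ℝ → ℝ → ℝ) (g : ℝ → V3) (a : ℝ) : Fin 3 → ℝ :=
  ![-(Lam ω k (fun σ => g σ 1) a) * g a 0,
     (Lam ω k (fun σ => g σ 1) a) * g a 0, 0]

set_option maxHeartbeats 1000000


/-- derivative of the smoothed negative part: clamp of `x/ε` to `[-1,0]`. -/
def nphi (ε : ℝ) : ℝ → ℝ := fun x => max (-1) (min 0 (x / ε))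

/-- smoothed negative part. -/
def pphi (ε : ℝ) : ℝ → ℝ := fun x => ∫ t in (0:ℝ)..x, nphi ε t

lemma nphi_continuous (ε : ℝ) : Continuous (nphi ε) := by
  exact continuous_const.max (continuous_const.min (continuous_id.div_const ε))

lemma nphi_nonpos (ε x : ℝ) : nphi ε x ≤ 0 := by
  unfold nphi
  exact max_le (by norm_num) (min_le_left _ _)

lemma neg_one_le_nphi (ε x : ℝ) : -1 ≤ nphi ε x := le_max_left _ _

lemma abs_nphi_le (ε x : ℝ) : |nphi ε x| ≤ 1 := by
  rw [abs_le]
  exact ⟨neg_one_le_nphi ε x, (nphi_nonpos ε x).trans zero_le_one⟩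

lemma nphi_of_nonneg {ε x : ℝ} (hε : 0 < ε) (hx : 0 ≤ x) : nphi ε x = 0 := by
  unfold nphi
  rw [min_eq_left (by positivity)]
  exact max_eq_right (by norm_num)

lemma nphi_of_le_neg {ε x : ℝ} (hε : 0 < ε) (hx : x ≤ -ε) : nphi ε x = -1 := by
  unfold nphi
  have h1 : x / ε ≤ -1 := by
    rw [div_le_iff₀ hε]; linarith
  rw [min_eq_right (h1.trans (by norm_num))]
  exact max_eq_left h1

lemma nphi_mul_nonneg {ε : ℝ} (hε : 0 < ε) (x : ℝ) : 0 ≤ nphi ε x * x := by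
  rcases le_or_gt 0 x with h | h
  · rw [nphi_of_nonneg hε h]; simp
  · nlinarith [nphi_nonpos ε x]

lemma nphi_mono {ε : ℝ} (hε : 0 < ε) : Monotone (nphi ε) := by
  intro a b hab
  unfold nphi
  gcongr

lemma nphi_lip {ε : ℝ} (hε : 0 < ε) (x y : ℝ) : |nphi ε x - nphi ε y| ≤ |x - y| / ε := by
  have h2 : |min 0 (x/ε) - min 0 (y/ε)| ≤ |x/ε - y/ε| := by
    rcases le_total (x/ε) 0 with hx | hx <;> rcases le_total (y/ε) 0 with hy | hy <;>
      simp [min_eq_left, min_eq_right, hx, hy, abs_le] <;> constructor <;>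
      cases' abs_le.1 (le_refl |x/ε - y/ε|) with h1 h1 <;> nlinarith [abs_nonneg (x/ε - y/ε), le_abs_self (x/ε - y/ε), neg_abs_le (x/ε - y/ε)]
  have h1 : |nphi ε x - nphi ε y| ≤ |min 0 (x/ε) - min 0 (y/ε)| := by
    unfold nphi
    have := abs_max_sub_max_le_abs (min 0 (x/ε)) (min 0 (y/ε)) (-1)
    simpa [max_comm] using this
  calc |nphi ε x - nphi ε y| ≤ |x/ε - y/ε| := h1.trans h2
  _ = |x - y| / ε := by rw [div_sub_div_same, abs_div, abs_of_pos hε]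

lemma nphi_intervalIntegrable (ε a b : ℝ) : IntervalIntegrable (nphi ε) volume a b :=
  (nphi_continuous ε).intervalIntegrable a b

lemma pphi_sub (ε x y : ℝ) : pphi ε y - pphi ε x = ∫ t in x..y, nphi ε t :=
  intervalIntegral.integral_interval_sub_left (nphi_intervalIntegrable ε 0 y)
    (nphi_intervalIntegrable ε 0 x)

lemma pphi_lip (ε x y : ℝ) : |pphi ε y - pphi ε x| ≤ |y - x| := by
  rw [pphi_sub]
  have := intervalIntegral.norm_integral_le_of_norm_le_const (C := 1) (f := nphi ε)
    (a := x) (b := y) ?_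
  · simpa [Real.norm_eq_abs] using this
  · intro t _; rw [Real.norm_eq_abs]; exact abs_nphi_le ε t

lemma pphi_continuous (ε : ℝ) : Continuous (pphi ε) := by
  have : LipschitzWith 1 (pphi ε) := by
    apply LipschitzWith.of_dist_le_mul
    intro x y
    rw [Real.dist_eq, Real.dist_eq, NNReal.coe_one, one_mul]
    exact pphi_lip ε y x
  exact this.continuous

lemma pphi_convex {ε : ℝ} (hε : 0 < ε) (x y : ℝ) :
    pphi ε y - pphi ε x ≤ nphi ε y * (y - x) := by
  rw [pphi_sub]
  rcases le_total x y with h | h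
  · have h1 : ∫ t in x..y, nphi ε t ≤ ∫ t in x..y, nphi ε y := by
      apply intervalIntegral.integral_mono_on h (nphi_intervalIntegrable ε x y)
        intervalIntegrable_const
      intro t ht; exact nphi_mono hε ht.2
    calc (∫ t in x..y, nphi ε t) ≤ ∫ t in x..y, nphi ε y := h1
    _ = nphi ε y * (y - x) := by
        rw [intervalIntegral.integral_const, smul_eq_mul, mul_comm]
  · rw [intervalIntegral.integral_symm]
    have h1 : ∫ t in y..x, nphi ε y ≤ ∫ t in y..x, nphi ε t := by
      apply intervalIntegral.integral_mono_on h intervalIntegrable_const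
        (nphi_intervalIntegrable ε y x)
      intro t ht; exact nphi_mono hε ht.1
    rw [intervalIntegral.integral_const, smul_eq_mul] at h1
    nlinarith [h1]

lemma pphi_taylor {ε : ℝ} (hε : 0 < ε) (x t : ℝ) :
    pphi ε (x + t) - pphi ε x ≤ nphi ε x * t + t ^ 2 / ε := by
  rw [pphi_sub]
  have key : ∀ s ∈ Icc (min x (x+t)) (max x (x+t)), |nphi ε s - nphi ε x| ≤ |t| / ε := by
    intro s hs
    refine (nphi_lip hε s x).trans ?_
    have : |s - x| ≤ |t| := by
      rcases le_total 0 t with h | h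
      · rw [min_eq_left (by linarith), max_eq_right (by linarith)] at hs
        rw [abs_of_nonneg (by linarith [hs.1]), abs_of_nonneg h]; linarith [hs.2]
      · rw [min_eq_right (by linarith), max_eq_left (by linarith)] at hs
        rw [abs_of_nonpos (by linarith [hs.2]), abs_of_nonpos h]; linarith [hs.1]
    gcongr
  rcases le_total 0 t with h | h
  · have h1 : ∫ s in x..(x+t), nphi ε s ≤ ∫ s in x..(x+t), (nphi ε x + |t|/ε) := by
      apply intervalIntegral.integral_mono_on (by linarith) (nphi_intervalIntegrable ε _ _)
        intervalIntegrable_const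
      intro s hs
      have := key s (by rw [min_eq_left (by linarith), max_eq_right (by linarith)]; exact hs)
      cases' abs_le.1 this with h2 h3
      linarith [le_abs_self (nphi ε s - nphi ε x)]
    rw [intervalIntegral.integral_const, smul_eq_mul] at h1
    have ht : |t| = t := abs_of_nonneg h
    calc (∫ s in x..(x+t), nphi ε s) ≤ (x + t - x) * (nphi ε x + |t|/ε) := h1
    _ = nphi ε x * t + t^2/ε := by rw [ht]; ring
  · rw [intervalIntegral.integral_symm]
    have h1 : ∫ s in (x+t)..x, (nphi ε x - |t|/ε) ≤ ∫ s in (x+t)..x, nphi ε s := by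
      apply intervalIntegral.integral_mono_on (by linarith) intervalIntegrable_const
        (nphi_intervalIntegrable ε _ _)
      intro s hs
      have := key s (by rw [min_eq_right (by linarith), max_eq_left (by linarith)]; exact hs)
      cases' abs_le.1 this with h2 h3
      linarith [neg_abs_le (nphi ε s - nphi ε x)]
    rw [intervalIntegral.integral_const, smul_eq_mul] at h1
    have ht : |t| = -t := abs_of_nonpos h
    rw [ht] at h1
    have e : (x - (x + t)) * (nphi ε x - -t / ε) = -(nphi ε x * t + t ^ 2 / ε) := by
      ring
    rw [e] at h1
    linarith

lemma pphi_taylor_min {ε : ℝ} (hε : 0 < ε) (x t : ℝ) :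
    pphi ε (x + t) - pphi ε x ≤ nphi ε x * t + min (2 * |t|) (t ^ 2 / ε) := by
  rcases le_total (2 * |t|) (t^2/ε) with h | h
  · rw [min_eq_left h]
    have h1 := pphi_lip ε x (x + t)
    have h2 : |x + t - x| = |t| := by ring_nf
    rw [h2] at h1
    cases' abs_le.1 h1 with h3 h4
    have h5 : nphi ε x * t ≥ -|t| := by
      have := abs_nphi_le ε x
      cases' abs_le.1 this with a1 a2
      rcases le_total 0 t with ht | ht
      · nlinarith [abs_of_nonneg ht]
      · nlinarith [abs_of_nonpos ht]
    linarith
  · rw [min_eq_right h]; exact pphi_taylor hε x t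

lemma pphi_of_nonneg {ε x : ℝ} (hε : 0 < ε) (hx : 0 ≤ x) : pphi ε x = 0 := by
  unfold pphi
  rw [intervalIntegral.integral_congr (g := fun _ => (0:ℝ)) ?_, intervalIntegral.integral_zero]
  intro t ht
  rw [uIcc_of_le hx] at ht
  exact nphi_of_nonneg hε ht.1

lemma pphi_nonneg {ε : ℝ} (hε : 0 < ε) (x : ℝ) : 0 ≤ pphi ε x := by
  rcases le_or_gt 0 x with h | h
  · rw [pphi_of_nonneg hε h]
  · have h0 : pphi ε 0 = 0 := pphi_of_nonneg hε le_rfl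
    have := pphi_convex hε x 0
    rw [h0, nphi_of_nonneg hε le_rfl] at this
    simpa using this

lemma pphi_le_negPart {ε : ℝ} (hε : 0 < ε) (x : ℝ) : pphi ε x ≤ max 0 (-x) := by
  rcases le_or_gt 0 x with h | h
  · rw [pphi_of_nonneg hε h]; exact le_max_left _ _
  · have h0 : pphi ε 0 = 0 := pphi_of_nonneg hε le_rfl
    have h1 := pphi_convex hε 0 x
    rw [h0] at h1
    have h2 : nphi ε x * (x - 0) ≤ -x := by
      nlinarith [neg_one_le_nphi ε x]
    have h3 : pphi ε x ≤ -x := by linarith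
    exact h3.trans (le_max_right _ _)

lemma negPart_le_pphi {ε : ℝ} (hε : 0 < ε) (x : ℝ) : max 0 (-x) - ε ≤ pphi ε x := by
  rcases le_or_gt (-ε) x with h | h
  · have h1 : max 0 (-x) ≤ ε := max_le hε.le (by linarith)
    have h2 := pphi_nonneg hε x
    linarith
  · have hx0 : x < 0 := by linarith
    have hmax : max 0 (-x) = -x := max_eq_right (by linarith)
    have hps : pphi ε 0 - pphi ε x = ∫ t in x..(0:ℝ), nphi ε t := pphi_sub ε x 0
    rw [pphi_of_nonneg hε le_rfl] at hps
    have hadd : (∫ t in x..(-ε), nphi ε t) + (∫ t in (-ε)..(0:ℝ), nphi ε t)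
        = ∫ t in x..(0:ℝ), nphi ε t :=
      intervalIntegral.integral_add_adjacent_intervals (nphi_intervalIntegrable ε x (-ε))
        (nphi_intervalIntegrable ε (-ε) 0)
    have h1 : (∫ t in x..(-ε), nphi ε t) = ε + x := by
      rw [intervalIntegral.integral_congr (g := fun _ => (-1:ℝ))]
      · rw [intervalIntegral.integral_const, smul_eq_mul]; ring
      · intro t ht
        rw [uIcc_of_le h.le] at ht
        exact nphi_of_le_neg hε ht.2
    have h2 : (∫ t in (-ε)..(0:ℝ), nphi ε t) ≤ 0 := by
      have : (∫ t in (-ε)..(0:ℝ), nphi ε t) ≤ ∫ t in (-ε)..(0:ℝ), (0:ℝ) := by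
        apply intervalIntegral.integral_mono_on (by linarith)
          (nphi_intervalIntegrable ε _ _) intervalIntegrable_const
        intro t _; exact nphi_nonpos ε t
      simpa using this
    rw [hmax]
    have : (∫ t in x..(0:ℝ), nphi ε t) ≤ ε + x := by
      rw [← hadd]; linarith
    linarith

lemma intervalIntegrable_of_integrableOn {f : ℝ → ℝ} {c d u v : ℝ}
    (hf : IntegrableOn f (Icc c d)) (h1 : u ∈ Icc c d) (h2 : v ∈ Icc c d) :
    IntervalIntegrable f volume u v := by
  rw [intervalIntegrable_iff]
  apply hf.mono_set
  apply le_trans Set.Ioc_subset_Icc_self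
  apply Icc_subset_Icc
  · exact le_min h1.1 h2.1
  · exact max_le h1.2 h2.2

lemma transport_est {ω ε : ℝ} (hω : 0 < ω) (hε : 0 < ε) {g G : ℝ → ℝ}
    (hG : IntegrableOn G (Icc 0 ω))
    (hrep : ∀ a ∈ Icc (0:ℝ) ω, g a = g 0 + ∫ s in (0:ℝ)..a, G s) :
    pphi ε (g ω) - pphi ε (g 0) ≤ ∫ a in Icc (0:ℝ) ω, nphi ε (g a) * G a := by
  have hGI : ∀ u ∈ Icc (0:ℝ) ω, ∀ v ∈ Icc (0:ℝ) ω, IntervalIntegrable G volume u v := by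
    intro u hu v hv
    exact intervalIntegrable_of_integrableOn hG hu hv
  have h0m : (0:ℝ) ∈ Icc (0:ℝ) ω := ⟨le_rfl, hω.le⟩
  have hωm : ω ∈ Icc (0:ℝ) ω := ⟨hω.le, le_rfl⟩
  have hgc : ContinuousOn g (Icc (0:ℝ) ω) := by
    have hprim : ContinuousOn (fun a => g 0 + ∫ s in (0:ℝ)..a, G s) (Icc (0:ℝ) ω) := by
      apply continuousOn_const.add
      have := intervalIntegral.continuousOn_primitive_interval
        (a := 0) (b := ω) (μ := volume) (f := G) (by rwa [uIcc_of_le hω.le])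
      rwa [uIcc_of_le hω.le] at this
    exact hprim.congr hrep
  have gdiff : ∀ u ∈ Icc (0:ℝ) ω, ∀ v ∈ Icc (0:ℝ) ω,
      g v - g u = ∫ s in u..v, G s := by
    intro u hu v hv
    rw [hrep u hu, hrep v hv]
    have := intervalIntegral.integral_interval_sub_left (hGI 0 h0m v hv) (hGI 0 h0m u hu)
    rw [← this]; ring
  -- integrability of the integrand
  have hgae : AEStronglyMeasurable g (volume.restrict (Icc (0:ℝ) ω)) :=
    (hgc.aemeasurable measurableSet_Icc).aestronglyMeasurable
  have hFmeas : AEStronglyMeasurable (fun a => nphi ε (g a) * G a)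
      (volume.restrict (Icc (0:ℝ) ω)) :=
    ((nphi_continuous ε).comp_aestronglyMeasurable hgae).mul hG.aestronglyMeasurable
  have hFint : IntegrableOn (fun a => nphi ε (g a) * G a) (Icc (0:ℝ) ω) := by
    apply Integrable.mono' hG.abs hFmeas
    filter_upwards with a
    rw [Real.norm_eq_abs, abs_mul]
    calc |nphi ε (g a)| * |G a| ≤ 1 * |G a| :=
      mul_le_mul_of_nonneg_right (abs_nphi_le ε (g a)) (abs_nonneg _)
    _ = |G a| := one_mul _
  have hFI : ∀ u ∈ Icc (0:ℝ) ω, ∀ v ∈ Icc (0:ℝ) ω,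
      IntervalIntegrable (fun a => nphi ε (g a) * G a) volume u v := by
    intro u hu v hv
    exact intervalIntegrable_of_integrableOn hFint hu hv
  have hGabsI : ∀ u ∈ Icc (0:ℝ) ω, ∀ v ∈ Icc (0:ℝ) ω,
      IntervalIntegrable (fun a => |G a|) volume u v := by
    intro u hu v hv
    exact intervalIntegrable_of_integrableOn hG.abs hu hv
  -- reduce to an η-approximate inequality
  apply le_of_forall_pos_le_add
  intro η hη
  set L : ℝ := ∫ a in Icc (0:ℝ) ω, |G a| with hL
  have hL0 : 0 ≤ L := integral_nonneg fun a => abs_nonneg _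
  set θ : ℝ := η / (L + 1) with hθ
  have hθ0 : 0 < θ := div_pos hη (by linarith)
  -- uniform continuity of g
  have huc := (isCompact_Icc.uniformContinuousOn_of_continuous hgc)
  rw [Metric.uniformContinuousOn_iff] at huc
  obtain ⟨d, hd0, hd⟩ := huc (θ * ε) (by positivity)
  obtain ⟨n, hn⟩ := exists_nat_gt (ω / d)
  have hn0 : 0 < (n:ℝ) := lt_of_le_of_lt (by positivity) hn
  have hnn : n ≠ 0 := by
    have : 0 < n := by exact_mod_cast hn0
    exact this.ne'
  set s : ℕ → ℝ := fun j => ω * j / n with hs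
  have hs0 : s 0 = 0 := by simp [hs]
  have hsn : s n = ω := by simp only [hs]; exact mul_div_cancel_right₀ ω hn0.ne'
  have hwidth : ∀ j : ℕ, s (j+1) - s j = ω / n := by
    intro j; simp only [hs]; push_cast; field_simp; ring
  have hwlt : ω / n < d := by
    rw [div_lt_iff₀ hn0]
    calc ω = (ω / d) * d := by field_simp [hd0.ne']
    _ < n * d := mul_lt_mul_of_pos_right hn hd0
    _ = d * n := mul_comm _ _
  have hsmono : ∀ j : ℕ, s j ≤ s (j+1) := by
    intro j
    have := hwidth j
    have : (0:ℝ) ≤ ω / n := by positivity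
    linarith [hwidth j]
  have hsmem : ∀ j : ℕ, j ≤ n → s j ∈ Icc (0:ℝ) ω := by
    intro j hj
    constructor
    · positivity
    · rw [hs]
      rw [div_le_iff₀ hn0]
      have : (j:ℝ) ≤ n := Nat.cast_le.mpr hj
      nlinarith
  -- the chain of inequalities
  have key : ∀ j : ℕ, j < n →
      pphi ε (g (s (j+1))) - pphi ε (g (s j)) - θ * ∫ a in s j..s (j+1), |G a| ≤
        ∫ a in s j..s (j+1), nphi ε (g a) * G a := by
    intro j hj
    have hmj : s j ∈ Icc (0:ℝ) ω := hsmem j hj.le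
    have hmj1 : s (j+1) ∈ Icc (0:ℝ) ω := hsmem (j+1) hj
    have hstep : ∀ a ∈ Icc (s j) (s (j+1)),
        nphi ε (g (s (j+1))) * G a - θ * |G a| ≤ nphi ε (g a) * G a := by
      intro a ha
      have hamem : a ∈ Icc (0:ℝ) ω := ⟨hmj.1.trans ha.1, ha.2.trans hmj1.2⟩
      have hdist : dist a (s (j+1)) < d := by
        rw [Real.dist_eq, abs_of_nonpos (by linarith [ha.2])]
        have := hwidth j
        linarith [ha.1, hwlt]
      have hgd := hd a hamem (s (j+1)) hmj1 hdist
      rw [Real.dist_eq] at hgd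
      have hnd : |nphi ε (g a) - nphi ε (g (s (j+1)))| ≤ θ := by
        calc |nphi ε (g a) - nphi ε (g (s (j+1)))| ≤ |g a - g (s (j+1))| / ε :=
          nphi_lip hε _ _
        _ ≤ (θ * ε) / ε := by gcongr
        _ = θ := by field_simp
      have habs : |(nphi ε (g a) - nphi ε (g (s (j+1)))) * G a| ≤ θ * |G a| := by
        rw [abs_mul]
        exact mul_le_mul_of_nonneg_right hnd (abs_nonneg _)
      nlinarith [neg_abs_le ((nphi ε (g a) - nphi ε (g (s (j+1)))) * G a), habs]
    have hmono := intervalIntegral.integral_mono_on (hsmono j)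
      (((hGI _ hmj _ hmj1).const_mul _).sub ((hGabsI _ hmj _ hmj1).const_mul θ))
      (hFI _ hmj _ hmj1) hstep
    have heval : (∫ a in s j..s (j+1), (nphi ε (g (s (j+1))) * G a - θ * |G a|))
        = nphi ε (g (s (j+1))) * (g (s (j+1)) - g (s j)) - θ * ∫ a in s j..s (j+1), |G a| := by
      rw [intervalIntegral.integral_sub ((hGI _ hmj _ hmj1).const_mul _)
        ((hGabsI _ hmj _ hmj1).const_mul θ)]
      rw [intervalIntegral.integral_const_mul, intervalIntegral.integral_const_mul]
      rw [← gdiff _ hmj _ hmj1]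
    rw [heval] at hmono
    have hconv := pphi_convex hε (g (s j)) (g (s (j+1)))
    linarith
  -- sum over pieces
  have hsumF : ∑ j ∈ Finset.range n, (∫ a in s j..s (j+1), nphi ε (g a) * G a)
      = ∫ a in (0:ℝ)..ω, nphi ε (g a) * G a := by
    have := intervalIntegral.sum_integral_adjacent_intervals
      (f := fun a => nphi ε (g a) * G a) (μ := volume) (a := s) (n := n) ?_
    · rwa [hs0, hsn] at this
    · intro k hk
      exact hFI _ (hsmem k hk.le) _ (hsmem (k+1) hk)
  have hsumG : ∑ j ∈ Finset.range n, (∫ a in s j..s (j+1), |G a|)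
      = ∫ a in (0:ℝ)..ω, |G a| := by
    have := intervalIntegral.sum_integral_adjacent_intervals
      (f := fun a => |G a|) (μ := volume) (a := s) (n := n) ?_
    · rwa [hs0, hsn] at this
    · intro k hk
      exact hGabsI _ (hsmem k hk.le) _ (hsmem (k+1) hk)
  have htel : ∑ j ∈ Finset.range n, (pphi ε (g (s (j+1))) - pphi ε (g (s j)))
      = pphi ε (g ω) - pphi ε (g 0) := by
    rw [Finset.sum_range_sub (f := fun j => pphi ε (g (s j)))]
    rw [hs0, hsn]
  have hsum := Finset.sum_le_sum (fun j hj => key j (Finset.mem_range.mp hj))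
  rw [hsumF] at hsum
  have hexp : ∑ j ∈ Finset.range n,
      (pphi ε (g (s (j+1))) - pphi ε (g (s j)) - θ * ∫ a in s j..s (j+1), |G a|)
      = (pphi ε (g ω) - pphi ε (g 0)) - θ * L := by
    rw [Finset.sum_sub_distrib, htel, ← Finset.mul_sum, hsumG]
    congr 2
    rw [hL, intervalIntegral.integral_of_le hω.le, ← integral_Icc_eq_integral_Ioc]
  rw [hexp] at hsum
  have hIcc : (∫ a in (0:ℝ)..ω, nphi ε (g a) * G a)
      = ∫ a in Icc (0:ℝ) ω, nphi ε (g a) * G a := by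
    rw [intervalIntegral.integral_of_le hω.le, ← integral_Icc_eq_integral_Ioc]
  rw [hIcc] at hsum
  have hθL : θ * L ≤ η := by
    rw [hθ]
    rw [div_mul_eq_mul_div, div_le_iff₀ (by linarith : (0:ℝ) < L + 1)]
    nlinarith
  linarith


/-! ### Section 3: the functionals `Φ_ε` and `Φ₀` -/

lemma V3_norm (v : V3) : ‖v‖ = ∑ i, |v i| := by
  rw [PiLp.norm_eq_sum (p := 1) (by norm_num)]
  simp [Real.norm_eq_abs]

lemma comp_aesm {ω : ℝ} (ζ : XX ω) (i : Fin 3) :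
    AEStronglyMeasurable (fun a => ζ a i) (muM ω) :=
  (PiLp.continuous_apply 1 _ i).comp_aestronglyMeasurable (Lp.aestronglyMeasurable ζ)

lemma comp_integrable {ω : ℝ} (ζ : XX ω) (i : Fin 3) :
    Integrable (fun a => ζ a i) (muM ω) := by
  apply Integrable.mono' (L1.integrable_coeFn ζ).norm (comp_aesm ζ i)
  filter_upwards with a
  rw [Real.norm_eq_abs, V3_norm]
  exact Finset.single_le_sum (f := fun j => |ζ a j|) (fun j _ => abs_nonneg _)
    (Finset.mem_univ i)

/-- `Φ_ε(ζ) = ∫ Σᵢ φ_ε(ζᵢ)`. -/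
def PhiE (ω ε : ℝ) (ζ : XX ω) : ℝ := ∫ a, (∑ i, pphi ε (ζ a i)) ∂(muM ω)

/-- `Φ₀(ζ) = ∫ Σᵢ (ζᵢ)⁻`. -/
def Phi0 (ω : ℝ) (ζ : XX ω) : ℝ := ∫ a, (∑ i, max 0 (-(ζ a i))) ∂(muM ω)

lemma negPart_le_abs (x : ℝ) : max 0 (-x) ≤ |x| := max_le (abs_nonneg _) (neg_le_abs _)

lemma integrable_sum_pphi {ω ε : ℝ} (hε : 0 < ε) (ζ : XX ω) :
    Integrable (fun a => ∑ i, pphi ε (ζ a i)) (muM ω) := by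
  apply Integrable.mono' (L1.integrable_coeFn ζ).norm
  · exact Finset.aestronglyMeasurable_fun_sum _ fun i _ =>
      (pphi_continuous ε).comp_aestronglyMeasurable (comp_aesm ζ i)
  · filter_upwards with a
    rw [Real.norm_eq_abs, V3_norm]
    calc |∑ i, pphi ε (ζ a i)| ≤ ∑ i, |pphi ε (ζ a i)| := Finset.abs_sum_le_sum_abs _ _
    _ ≤ ∑ i, |ζ a i| := by
        apply Finset.sum_le_sum
        intro i _
        rw [abs_of_nonneg (pphi_nonneg hε _)]
        exact (pphi_le_negPart hε _).trans (negPart_le_abs _)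

lemma integrable_sum_negPart {ω : ℝ} (ζ : XX ω) :
    Integrable (fun a => ∑ i, max 0 (-(ζ a i))) (muM ω) := by
  apply Integrable.mono' (L1.integrable_coeFn ζ).norm
  · exact Finset.aestronglyMeasurable_fun_sum _ fun i _ =>
      (continuous_const.max continuous_neg).comp_aestronglyMeasurable (comp_aesm ζ i)
  · filter_upwards with a
    rw [Real.norm_eq_abs, V3_norm]
    calc |∑ i, max 0 (-(ζ a i))| ≤ ∑ i, |max 0 (-(ζ a i))| := Finset.abs_sum_le_sum_abs _ _
    _ ≤ ∑ i, |ζ a i| := by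
        apply Finset.sum_le_sum
        intro i _
        rw [abs_of_nonneg (le_max_left _ _)]
        exact negPart_le_abs _

lemma norm_XX {ω : ℝ} (ζ : XX ω) : ‖ζ‖ = ∫ a, (∑ i, |ζ a i|) ∂(muM ω) := by
  rw [L1.norm_eq_integral_norm]
  apply integral_congr_ae
  filter_upwards with a
  rw [V3_norm]

lemma PhiE_sub_le {ω ε : ℝ} (hε : 0 < ε) (ζ ξ : XX ω) :
    PhiE ω ε ζ - PhiE ω ε ξ ≤ ‖ζ - ξ‖ := by
  rw [norm_XX]
  rw [PhiE, PhiE, ← integral_sub (integrable_sum_pphi hε ζ) (integrable_sum_pphi hε ξ)]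
  apply integral_mono_ae
  · exact (integrable_sum_pphi hε ζ).sub (integrable_sum_pphi hε ξ)
  · exact integrable_finset_sum _ fun i _ => (comp_integrable (ζ - ξ) i).abs
  · filter_upwards [Lp.coeFn_sub ζ ξ] with a ha
    rw [← Finset.sum_sub_distrib]
    apply Finset.sum_le_sum
    intro i _
    have : (ζ - ξ) a i = ζ a i - ξ a i := by rw [ha]; rfl
    rw [this]
    calc pphi ε (ζ a i) - pphi ε (ξ a i) ≤ |pphi ε (ζ a i) - pphi ε (ξ a i)| :=
      le_abs_self _
    _ ≤ |ζ a i - ξ a i| := pphi_lip ε _ _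

lemma Phi0_sub_le {ω : ℝ} (ζ ξ : XX ω) :
    Phi0 ω ζ - Phi0 ω ξ ≤ ‖ζ - ξ‖ := by
  rw [norm_XX]
  rw [Phi0, Phi0, ← integral_sub (integrable_sum_negPart ζ) (integrable_sum_negPart ξ)]
  apply integral_mono_ae
  · exact (integrable_sum_negPart ζ).sub (integrable_sum_negPart ξ)
  · exact integrable_finset_sum _ fun i _ => (comp_integrable (ζ - ξ) i).abs
  · filter_upwards [Lp.coeFn_sub ζ ξ] with a ha
    rw [← Finset.sum_sub_distrib]
    apply Finset.sum_le_sum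
    intro i _
    have h1 : (ζ - ξ) a i = ζ a i - ξ a i := by rw [ha]; rfl
    rw [h1]
    have h2 : |max 0 (-(ζ a i)) - max 0 (-(ξ a i))| ≤ |ζ a i - ξ a i| := by
      have := abs_max_sub_max_le_abs (-(ζ a i)) (-(ξ a i)) 0
      calc |max 0 (-(ζ a i)) - max 0 (-(ξ a i))|
          = |max (-(ζ a i)) 0 - max (-(ξ a i)) 0| := by rw [max_comm, max_comm (-(ξ a i))]
      _ ≤ |(-(ζ a i)) - (-(ξ a i))| := this
      _ = |ζ a i - ξ a i| := by rw [← abs_neg]; ring_nf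
    exact (le_abs_self _).trans h2

lemma PhiE_continuous {ω ε : ℝ} (hε : 0 < ε) : Continuous (PhiE ω ε) := by
  have : LipschitzWith 1 (PhiE ω ε) := by
    apply LipschitzWith.of_dist_le_mul
    intro ζ ξ
    rw [Real.dist_eq, NNReal.coe_one, one_mul, dist_eq_norm, abs_le]
    constructor
    · have := PhiE_sub_le hε ξ ζ
      rw [norm_sub_rev] at this
      linarith
    · exact PhiE_sub_le hε ζ ξ
  exact this.continuous

lemma PhiE_nonneg {ω ε : ℝ} (hε : 0 < ε) (ζ : XX ω) : 0 ≤ PhiE ω ε ζ :=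
  integral_nonneg fun a => Finset.sum_nonneg fun i _ => pphi_nonneg hε _

lemma Phi0_nonneg {ω : ℝ} (ζ : XX ω) : 0 ≤ Phi0 ω ζ :=
  integral_nonneg fun a => Finset.sum_nonneg fun i _ => le_max_left _ _

lemma PhiE_le_Phi0 {ω ε : ℝ} (hε : 0 < ε) (ζ : XX ω) : PhiE ω ε ζ ≤ Phi0 ω ζ := by
  apply integral_mono_ae (integrable_sum_pphi hε ζ) (integrable_sum_negPart ζ)
  filter_upwards with a
  exact Finset.sum_le_sum fun i _ => pphi_le_negPart hε _

instance muM_finite (ω : ℝ) : IsFiniteMeasure (muM ω) := by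
  constructor
  rw [muM, Measure.restrict_apply_univ, Real.volume_Icc]
  exact ENNReal.ofReal_lt_top

lemma muM_univ_toReal {ω : ℝ} (hω : 0 < ω) : ((muM ω) univ).toReal = ω := by
  rw [muM, Measure.restrict_apply_univ, Real.volume_Icc]
  rw [ENNReal.toReal_ofReal (by linarith)]
  ring

lemma Phi0_le_PhiE_add {ω ε : ℝ} (hω : 0 < ω) (hε : 0 < ε) (ζ : XX ω) :
    Phi0 ω ζ ≤ PhiE ω ε ζ + 3 * ε * ω := by
  have h1 : Phi0 ω ζ ≤ ∫ a, ((∑ i, pphi ε (ζ a i)) + 3 * ε) ∂(muM ω) := by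
    apply integral_mono_ae (integrable_sum_negPart ζ)
      ((integrable_sum_pphi hε ζ).add (integrable_const _))
    filter_upwards with a
    have : ∀ i : Fin 3, max 0 (-(ζ a i)) ≤ pphi ε (ζ a i) + ε := by
      intro i; linarith [negPart_le_pphi hε (ζ a i)]
    calc (∑ i, max 0 (-(ζ a i))) ≤ ∑ i : Fin 3, (pphi ε (ζ a i) + ε) :=
      Finset.sum_le_sum fun i _ => this i
    _ = (∑ i, pphi ε (ζ a i)) + 3 * ε := by
        rw [Finset.sum_add_distrib, Finset.sum_const, Finset.card_univ, Fintype.card_fin,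
          nsmul_eq_mul]
        norm_num
  rw [integral_add (integrable_sum_pphi hε ζ) (integrable_const _)] at h1
  rw [integral_const, smul_eq_mul, measureReal_def, muM_univ_toReal hω] at h1
  calc Phi0 ω ζ ≤ PhiE ω ε ζ + ω * (3 * ε) := h1
  _ = PhiE ω ε ζ + 3 * ε * ω := by ring

lemma Phi0_zero_of_xpos {ω : ℝ} {ζ : XX ω} (h : ζ ∈ Xpos ω) : Phi0 ω ζ = 0 := by
  rw [Phi0]
  rw [integral_congr_ae (g := fun _ => (0:ℝ)) ?_, integral_zero]
  filter_upwards [h] with a ha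
  apply Finset.sum_eq_zero
  intro i _
  rw [max_eq_left (by linarith [ha i])]

lemma xpos_of_Phi0_zero {ω : ℝ} {ζ : XX ω} (h : Phi0 ω ζ = 0) : ζ ∈ Xpos ω := by
  have hnn : 0 ≤ᶠ[ae (muM ω)] fun a => ∑ i, max 0 (-(ζ a i)) := by
    filter_upwards with a
    exact Finset.sum_nonneg fun i _ => le_max_left _ _
  have := (integral_eq_zero_iff_of_nonneg_ae hnn (integrable_sum_negPart ζ)).mp h
  filter_upwards [this] with a ha i
  have hz : ∀ j ∈ (Finset.univ : Finset (Fin 3)), max 0 (-(ζ a j)) = 0 := by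
    rw [← Finset.sum_eq_zero_iff_of_nonneg (fun j _ => le_max_left _ _)]
    exact ha
  have := hz i (Finset.mem_univ i)
  by_contra hneg
  push_neg at hneg
  rw [max_eq_right (by linarith)] at this
  linarith

lemma ae_le_const_of_ae {ω c C : ℝ} (hω : 0 < ω) (h : ∀ᵐ _a ∂(muM ω), c ≤ C) : c ≤ C := by
  by_contra hc
  rw [ae_iff] at h
  have he : {a : ℝ | ¬ c ≤ C} = univ := by
    ext a; simp [hc]
  rw [he] at h
  rw [muM, Measure.restrict_apply_univ, Real.volume_Icc] at h
  rw [ENNReal.ofReal_eq_zero] at h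
  linarith


/-! ### Section 4: the core dissipativity estimate for `A` -/

lemma nphi_offdiag {ε : ℝ} (hε : 0 < ε) {n c M y : ℝ} (hn1 : -1 ≤ n) (hn0 : n ≤ 0)
    (hc : 0 ≤ c) (hcM : c ≤ M) : n * (c * y) ≤ M * max 0 (-y) := by
  rcases le_or_gt 0 y with h | h
  · rw [max_eq_left (by linarith)]
    nlinarith [mul_nonneg hc h]
  · rw [max_eq_right (by linarith)]
    nlinarith [mul_nonneg hc (neg_nonneg.mpr h.le)]

lemma negPart_integral_le {α : Type*} {m : MeasurableSpace α} {μ : Measure α}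
    {f : α → ℝ} (hf : Integrable f μ) :
    max 0 (-(∫ a, f a ∂μ)) ≤ ∫ a, max 0 (-(f a)) ∂μ := by
  have hint : Integrable (fun a => max 0 (-(f a))) μ := by
    apply Integrable.mono' hf.abs
      ((continuous_const.max continuous_neg).comp_aestronglyMeasurable hf.aestronglyMeasurable)
    filter_upwards with a
    rw [Real.norm_eq_abs, abs_of_nonneg (le_max_left _ _)]
    exact negPart_le_abs _
  apply max_le
  · exact integral_nonneg fun a => le_max_left _ _
  · rw [← integral_neg]
    apply integral_mono_ae hf.neg hint
    filter_upwards with a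
    exact le_max_right _ _

lemma core_est {ω p q : ℝ} (hω : 0 < ω) {β γ δ μf : ℝ → ℝ} {Mβ Mγ Mδ : ℝ}
    (hβm : Measurable β)
    (hβ : ∀ᵐ a ∂(muM ω), 0 ≤ β a ∧ β a ≤ Mβ)
    (hγ : ∀ᵐ a ∂(muM ω), 0 ≤ γ a ∧ γ a ≤ Mγ)
    (hδ : ∀ᵐ a ∂(muM ω), 0 ≤ δ a ∧ δ a ≤ Mδ)
    (hμ : ∀ᵐ a ∂(muM ω), 0 ≤ μf a)
    (hp : p ∈ Icc (0:ℝ) 1) (hq : q ∈ Icc (0:ℝ) 1)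
    {ε : ℝ} (hε : 0 < ε) (u Y : XX ω) (g g' : ℝ → Fin 3 → ℝ)
    (hdom : InDomA ω p q β μf u g g')
    (hYv : ∀ᵐ a ∂(muM ω), ∀ i, Y a i = Aval γ δ μf g g' a i) :
    (∫ a, (∑ i, nphi ε (u a i) * Y a i) ∂(muM ω)) ≤ (3*Mβ + Mγ + Mδ) * Phi0 ω u := by
  obtain ⟨hae, hg'int, hAC, hμg, hbc⟩ := hdom
  have hmuM : muM ω = volume.restrict (Icc 0 ω) := rfl
  have hMβ0 : 0 ≤ Mβ := ae_le_const_of_ae hω (hβ.mono fun a h => h.1.trans h.2)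
  have hMγ0 : 0 ≤ Mγ := ae_le_const_of_ae hω (hγ.mono fun a h => h.1.trans h.2)
  have hMδ0 : 0 ≤ Mδ := ae_le_const_of_ae hω (hδ.mono fun a h => h.1.trans h.2)
  -- component integrability of g'
  have hg'i : ∀ i : Fin 3, IntegrableOn (fun a => g' a i) (Icc 0 ω) := by
    intro i
    apply Integrable.mono' hg'int.norm
      ((continuous_apply i).comp_aestronglyMeasurable hg'int.aestronglyMeasurable)
    filter_upwards with a
    exact norm_le_pi_norm (g' a) i
  -- continuity of g components on [0,ω]
  have hgc : ∀ i : Fin 3, ContinuousOn (fun a => g a i) (Icc (0:ℝ) ω) := by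
    intro i
    have hprim : ContinuousOn (fun a => g 0 i + ∫ s in (0:ℝ)..a, g' s i) (Icc (0:ℝ) ω) := by
      apply continuousOn_const.add
      have := intervalIntegral.continuousOn_primitive_interval
        (a := 0) (b := ω) (μ := volume) (f := fun s => g' s i)
        (by rw [uIcc_of_le hω.le]; exact hg'i i)
      rwa [uIcc_of_le hω.le] at this
    exact hprim.congr (hAC i)
  have hgae : ∀ i : Fin 3, AEStronglyMeasurable (fun a => g a i) (muM ω) := by
    intro i
    rw [hmuM]
    exact ((hgc i).aemeasurable measurableSet_Icc).aestronglyMeasurable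
  have haeg : ∀ᵐ a ∂(muM ω), ∀ i, u a i = g a i := hae
  -- P = Phi0 in terms of g
  have hPint : Integrable (fun a => ∑ i, max 0 (-(g a i))) (muM ω) := by
    apply (integrable_sum_negPart u).congr
    filter_upwards [haeg] with a ha
    congr 1
    ext i
    rw [ha i]
  have hPu : (∫ a, (∑ i, max 0 (-(g a i))) ∂(muM ω)) = Phi0 ω u := by
    rw [Phi0]
    apply integral_congr_ae
    filter_upwards [haeg] with a ha
    congr 1
    ext i
    rw [ha i]
  set P : ℝ := ∫ a, (∑ i, max 0 (-(g a i))) ∂(muM ω) with hPdef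
  have hP0 : 0 ≤ P := integral_nonneg fun a => Finset.sum_nonneg fun i _ => le_max_left _ _
  -- integrable LHS
  have hYint : Integrable (fun a => ∑ i, nphi ε (u a i) * Y a i) (muM ω) := by
    apply Integrable.mono' (f := fun a => ∑ i, nphi ε (u a i) * Y a i)
      (g := fun a => ∑ i, |Y a i|) (integrable_finset_sum _ fun i _ => (comp_integrable Y i).abs)
    · exact Finset.aestronglyMeasurable_fun_sum _ fun i _ =>
        (((nphi_continuous ε).comp_aestronglyMeasurable (comp_aesm u i)).mul (comp_aesm Y i))
    · filter_upwards with a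
      rw [Real.norm_eq_abs]
      calc |∑ i, nphi ε (u a i) * Y a i| ≤ ∑ i, |nphi ε (u a i) * Y a i| :=
        Finset.abs_sum_le_sum_abs _ _
      _ ≤ ∑ i, |Y a i| := by
          apply Finset.sum_le_sum
          intro i _
          rw [abs_mul]
          calc |nphi ε (u a i)| * |Y a i| ≤ 1 * |Y a i| :=
            mul_le_mul_of_nonneg_right (abs_nphi_le ε _) (abs_nonneg _)
          _ = |Y a i| := one_mul _
  -- the two majorant pieces
  have hT1i : ∀ i : Fin 3, Integrable (fun a => nphi ε (g a i) * g' a i) (muM ω) := by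
    intro i
    apply Integrable.mono' (f := fun a => nphi ε (g a i) * g' a i) (hg'i i).abs
      (((nphi_continuous ε).comp_aestronglyMeasurable (hgae i)).mul
        (by rw [hmuM]; exact (hg'i i).aestronglyMeasurable))
    filter_upwards with a
    rw [Real.norm_eq_abs, abs_mul]
    calc |nphi ε (g a i)| * |g' a i| ≤ 1 * |g' a i| :=
      mul_le_mul_of_nonneg_right (abs_nphi_le ε _) (abs_nonneg _)
    _ = |g' a i| := one_mul _
  have hT1int : Integrable (fun a => ∑ i, nphi ε (g a i) * (-(g' a i))) (muM ω) := by
    have : (fun a => ∑ i, nphi ε (g a i) * (-(g' a i)))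
        = fun a => ∑ i, -(nphi ε (g a i) * (g' a i)) := by
      funext a; congr 1; ext i; ring
    rw [this]
    exact integrable_finset_sum _ fun i _ => (hT1i i).neg
  have hg1int : Integrable (fun a => max 0 (-(g a 1))) (muM ω) := by
    apply Integrable.mono' hPint
      ((continuous_const.max continuous_neg).comp_aestronglyMeasurable (hgae 1))
    filter_upwards with a
    rw [Real.norm_eq_abs, abs_of_nonneg (le_max_left _ _)]
    exact Finset.single_le_sum (f := fun j => max 0 (-(g a j)))
      (fun j _ => le_max_left _ _) (Finset.mem_univ 1)
  have hT2int : Integrable (fun a => (Mγ + Mδ) * max 0 (-(g a 1))) (muM ω) :=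
    hg1int.const_mul _
  -- Step 1+2 : a.e. pointwise bound
  have step12 : (∫ a, (∑ i, nphi ε (u a i) * Y a i) ∂(muM ω)) ≤
      ∫ a, ((∑ i, nphi ε (g a i) * (-(g' a i))) + (Mγ + Mδ) * max 0 (-(g a 1))) ∂(muM ω) := by
    apply integral_mono_ae hYint (hT1int.add hT2int)
    filter_upwards [haeg, hYv, hγ, hδ, hμ] with a hua hYa hγa hδa hμa
    have hrw : (∑ i, nphi ε (u a i) * Y a i)
        = ∑ i, nphi ε (g a i) * Aval γ δ μf g g' a i := by
      congr 1
      ext i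
      rw [hua i, hYa i]
    rw [hrw]
    simp only [Fin.sum_univ_three, Aval, Matrix.cons_val_zero, Matrix.cons_val_one,
      Matrix.head_cons, Matrix.cons_val_two, Matrix.tail_cons]
    have b1 : 0 ≤ μf a * (nphi ε (g a 0) * g a 0) :=
      mul_nonneg hμa (nphi_mul_nonneg hε _)
    have b2 : 0 ≤ μf a * (nphi ε (g a 1) * g a 1) :=
      mul_nonneg hμa (nphi_mul_nonneg hε _)
    have b3 : 0 ≤ μf a * (nphi ε (g a 2) * g a 2) :=
      mul_nonneg hμa (nphi_mul_nonneg hε _)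
    have b4 : 0 ≤ (δ a + γ a) * (nphi ε (g a 1) * g a 1) :=
      mul_nonneg (add_nonneg hδa.1 hγa.1) (nphi_mul_nonneg hε _)
    have b5 : nphi ε (g a 0) * (δ a * g a 1) ≤ Mδ * max 0 (-(g a 1)) :=
      nphi_offdiag hε (neg_one_le_nphi ε _) (nphi_nonpos ε _) hδa.1 hδa.2
    have b6 : nphi ε (g a 2) * (γ a * g a 1) ≤ Mγ * max 0 (-(g a 1)) :=
      nphi_offdiag hε (neg_one_le_nphi ε _) (nphi_nonpos ε _) hγa.1 hγa.2
    simp only [Pi.add_apply]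
    nlinarith [b1, b2, b3, b4, b5, b6]
  -- Step 3 : split the integral
  have step3 : (∫ a, ((∑ i, nphi ε (g a i) * (-(g' a i))) + (Mγ + Mδ) * max 0 (-(g a 1))) ∂(muM ω))
      = (∫ a, (∑ i, nphi ε (g a i) * (-(g' a i))) ∂(muM ω))
        + (Mγ + Mδ) * ∫ a, max 0 (-(g a 1)) ∂(muM ω) := by
    rw [integral_add hT1int hT2int, integral_const_mul]
  have hg1P : (∫ a, max 0 (-(g a 1)) ∂(muM ω)) ≤ P := by
    apply integral_mono_ae hg1int hPint
    filter_upwards with a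
    exact Finset.single_le_sum (f := fun j => max 0 (-(g a j)))
      (fun j _ => le_max_left _ _) (Finset.mem_univ 1)
  -- Step 4 : transport estimate
  have step4 : (∫ a, (∑ i, nphi ε (g a i) * (-(g' a i))) ∂(muM ω))
      ≤ ∑ i : Fin 3, max 0 (-(g 0 i)) := by
    have hsplit : (∫ a, (∑ i, nphi ε (g a i) * (-(g' a i))) ∂(muM ω))
        = ∑ i : Fin 3, ∫ a, nphi ε (g a i) * (-(g' a i)) ∂(muM ω) := by
      apply integral_finset_sum
      intro i _
      have : (fun a => nphi ε (g a i) * (-(g' a i)))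
          = fun a => -(nphi ε (g a i) * (g' a i)) := by
        funext a; ring
      rw [this]
      exact (hT1i i).neg
    rw [hsplit]
    apply Finset.sum_le_sum
    intro i _
    have hneg : (∫ a, nphi ε (g a i) * (-(g' a i)) ∂(muM ω))
        = -(∫ a, nphi ε (g a i) * (g' a i) ∂(muM ω)) := by
      rw [← integral_neg]
      congr 1
      funext a
      ring
    rw [hneg]
    have htr := transport_est (g := fun a => g a i) (G := fun a => g' a i) hω hε
      (hg'i i) (hAC i)
    have hple := pphi_le_negPart hε (g 0 i)
    have hpω := pphi_nonneg hε (g ω i)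
    rw [hmuM]
    linarith [htr]
  -- Step 5 : boundary estimate via Bvec
  have step5 : (∑ i : Fin 3, max 0 (-(g 0 i))) ≤ 3 * Mβ * P := by
    rw [hbc]
    have hβae : AEStronglyMeasurable β (muM ω) := hβm.aestronglyMeasurable
    -- bound for generic integrand of the form β * w with |w| ≤ pointwise comb
    have hmemae : ∀ᵐ a ∂(muM ω), a ∈ Icc (0:ℝ) ω := by
      rw [hmuM]
      exact ae_restrict_mem measurableSet_Icc
    have row : ∀ (w : ℝ → ℝ), ContinuousOn w (Icc (0:ℝ) ω) →
        (∀ᵐ a ∂(muM ω), max 0 (-(w a)) ≤ ∑ j, max 0 (-(g a j))) →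
        max 0 (-(∫ a in Icc (0:ℝ) ω, β a * w a)) ≤ Mβ * P := by
      intro w hwc hwb
      obtain ⟨K, hK⟩ := isCompact_Icc.exists_bound_of_continuousOn hwc
      have hwae : AEStronglyMeasurable w (muM ω) := by
        rw [hmuM]
        exact (hwc.aemeasurable measurableSet_Icc).aestronglyMeasurable
      have hint : Integrable (fun a => β a * w a) (muM ω) := by
        apply Integrable.mono' (f := fun a => β a * w a) (integrable_const (Mβ * K))
          (hβae.mul hwae)
        filter_upwards [hβ, hmemae] with a hβa hamem
        rw [Real.norm_eq_abs, abs_mul, abs_of_nonneg hβa.1]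
        have h1 : |w a| ≤ K := by
          have := hK a hamem
          rwa [Real.norm_eq_abs] at this
        have h2 : 0 ≤ K := (abs_nonneg _).trans h1
        exact mul_le_mul hβa.2 h1 (abs_nonneg _) hMβ0
      have heq : (∫ a in Icc (0:ℝ) ω, β a * w a) = ∫ a, β a * w a ∂(muM ω) := by
        rw [hmuM]
      rw [heq]
      calc max 0 (-(∫ a, β a * w a ∂(muM ω))) ≤ ∫ a, max 0 (-(β a * w a)) ∂(muM ω) :=
        negPart_integral_le hint
      _ ≤ ∫ a, Mβ * (∑ j, max 0 (-(g a j))) ∂(muM ω) := by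
          apply integral_mono_ae
          · apply Integrable.mono' (f := fun a => max 0 (-(β a * w a))) hint.abs
              ((continuous_const.max continuous_neg).comp_aestronglyMeasurable
                (hβae.mul hwae))
            filter_upwards with a
            rw [Real.norm_eq_abs, abs_of_nonneg (le_max_left _ _)]
            exact negPart_le_abs _
          · exact hPint.const_mul _
          · filter_upwards [hβ, hwb] with a hβa hwba
            have h1 : max 0 (-(β a * w a)) ≤ β a * max 0 (-(w a)) := by
              apply max_le (mul_nonneg hβa.1 (le_max_left _ _))
              calc -(β a * w a) = β a * (-(w a)) := by ring
              _ ≤ β a * max 0 (-(w a)) :=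
                mul_le_mul_of_nonneg_left (le_max_right _ _) hβa.1
            calc max 0 (-(β a * w a)) ≤ β a * max 0 (-(w a)) := h1
            _ ≤ Mβ * max 0 (-(w a)) :=
                mul_le_mul_of_nonneg_right hβa.2 (le_max_left _ _)
            _ ≤ Mβ * (∑ j, max 0 (-(g a j))) :=
                mul_le_mul_of_nonneg_left hwba hMβ0
      _ = Mβ * P := by rw [integral_const_mul]
    -- apply to the three rows
    have row0 : max 0 (-(Bvec ω p q β g 0)) ≤ Mβ * P := by
      simp only [Bvec, Matrix.cons_val_zero]
      apply row
      · exact ((hgc 0).add (continuousOn_const.mul (hgc 1))).add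
          (continuousOn_const.mul (hgc 2))
      · filter_upwards with a
        rw [Fin.sum_univ_three]
        have e0 : -(g a 0) ≤ max 0 (-(g a 0)) := le_max_right _ _
        have e1 : (1-p) * (-(g a 1)) ≤ max 0 (-(g a 1)) := by
          calc (1-p) * (-(g a 1)) ≤ (1-p) * max 0 (-(g a 1)) :=
            mul_le_mul_of_nonneg_left (le_max_right _ _) (by linarith [hp.2])
          _ ≤ 1 * max 0 (-(g a 1)) :=
            mul_le_mul_of_nonneg_right (by linarith [hp.1]) (le_max_left _ _)
          _ = _ := one_mul _
        have e2 : (1-q) * (-(g a 2)) ≤ max 0 (-(g a 2)) := by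
          calc (1-q) * (-(g a 2)) ≤ (1-q) * max 0 (-(g a 2)) :=
            mul_le_mul_of_nonneg_left (le_max_right _ _) (by linarith [hq.2])
          _ ≤ 1 * max 0 (-(g a 2)) :=
            mul_le_mul_of_nonneg_right (by linarith [hq.1]) (le_max_left _ _)
          _ = _ := one_mul _
        apply max_le
        · have : ∀ j : Fin 3, (0:ℝ) ≤ max 0 (-(g a j)) := fun j => le_max_left _ _
          linarith [this 0, this 1, this 2]
        · nlinarith [e0, e1, e2]
    have row1 : max 0 (-(Bvec ω p q β g 1)) ≤ Mβ * P := by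
      simp only [Bvec, Matrix.cons_val_one, Matrix.head_cons]
      have : (∫ a in Icc (0:ℝ) ω, p * (β a * g a 1))
          = ∫ a in Icc (0:ℝ) ω, β a * (p * g a 1) := by
        congr 1
        funext a
        ring
      rw [this]
      apply row
      · exact continuousOn_const.mul (hgc 1)
      · filter_upwards with a
        rw [Fin.sum_univ_three]
        have e1 : p * (-(g a 1)) ≤ max 0 (-(g a 1)) := by
          calc p * (-(g a 1)) ≤ p * max 0 (-(g a 1)) :=
            mul_le_mul_of_nonneg_left (le_max_right _ _) hp.1
          _ ≤ 1 * max 0 (-(g a 1)) :=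
            mul_le_mul_of_nonneg_right hp.2 (le_max_left _ _)
          _ = _ := one_mul _
        apply max_le
        · have : ∀ j : Fin 3, (0:ℝ) ≤ max 0 (-(g a j)) := fun j => le_max_left _ _
          linarith [this 0, this 1, this 2]
        · have h0 : (0:ℝ) ≤ max 0 (-(g a 0)) := le_max_left _ _
          have h2 : (0:ℝ) ≤ max 0 (-(g a 2)) := le_max_left _ _
          nlinarith [e1]
    have row2 : max 0 (-(Bvec ω p q β g 2)) ≤ Mβ * P := by
      simp only [Bvec, Matrix.cons_val_two, Matrix.tail_cons, Matrix.head_cons]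
      have : (∫ a in Icc (0:ℝ) ω, q * (β a * g a 2))
          = ∫ a in Icc (0:ℝ) ω, β a * (q * g a 2) := by
        congr 1
        funext a
        ring
      rw [this]
      apply row
      · exact continuousOn_const.mul (hgc 2)
      · filter_upwards with a
        rw [Fin.sum_univ_three]
        have e2 : q * (-(g a 2)) ≤ max 0 (-(g a 2)) := by
          calc q * (-(g a 2)) ≤ q * max 0 (-(g a 2)) :=
            mul_le_mul_of_nonneg_left (le_max_right _ _) hq.1
          _ ≤ 1 * max 0 (-(g a 2)) :=
            mul_le_mul_of_nonneg_right hq.2 (le_max_left _ _)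
          _ = _ := one_mul _
        apply max_le
        · have : ∀ j : Fin 3, (0:ℝ) ≤ max 0 (-(g a j)) := fun j => le_max_left _ _
          linarith [this 0, this 1, this 2]
        · have h0 : (0:ℝ) ≤ max 0 (-(g a 0)) := le_max_left _ _
          have h1 : (0:ℝ) ≤ max 0 (-(g a 1)) := le_max_left _ _
          nlinarith [e2]
    rw [Fin.sum_univ_three]
    linarith [row0, row1, row2]
  calc (∫ a, (∑ i, nphi ε (u a i) * Y a i) ∂(muM ω))
      ≤ (∫ a, (∑ i, nphi ε (g a i) * (-(g' a i))) ∂(muM ω))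
        + (Mγ + Mδ) * ∫ a, max 0 (-(g a 1)) ∂(muM ω) := by
        rw [← step3]; exact step12
  _ ≤ (∑ i : Fin 3, max 0 (-(g 0 i))) + (Mγ + Mδ) * P := by
      have := mul_le_mul_of_nonneg_left hg1P (by linarith : (0:ℝ) ≤ Mγ + Mδ)
      linarith [step4]
  _ ≤ 3 * Mβ * P + (Mγ + Mδ) * P := by linarith [step5]
  _ = (3*Mβ + Mγ + Mδ) * Phi0 ω u := by rw [← hPu]; ring


/-! ### Section 5: abstract consequences of the semigroup axioms -/

lemma tendsto_avg {E : Type*} [NormedAddCommGroup E] [NormedSpace ℝ E] [CompleteSpace E]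
    {F : ℝ → E} (hc : ContinuousOn F (Ici 0)) {t : ℝ} (ht : 0 ≤ t) :
    Tendsto (fun h : ℝ => h⁻¹ • ∫ u in t..(t+h), F u) (𝓝[>] 0) (𝓝 (F t)) := by
  rw [Metric.tendsto_nhdsWithin_nhds]
  intro ε hε
  have hct : ContinuousWithinAt F (Ici 0) t := hc t (mem_Ici.mpr ht)
  rw [Metric.continuousWithinAt_iff] at hct
  obtain ⟨d, hd0, hd⟩ := hct (ε/2) (by linarith)
  refine ⟨d, hd0, ?_⟩
  intro h hh hdist
  rw [mem_Ioi] at hh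
  rw [Real.dist_eq, sub_zero, abs_of_pos hh] at hdist
  have hInt : IntervalIntegrable F volume t (t + h) := by
    apply ContinuousOn.intervalIntegrable
    apply hc.mono
    rw [uIcc_of_le (by linarith)]
    intro x hx
    exact le_trans ht hx.1
  have hconst : IntervalIntegrable (fun _ => F t) volume t (t+h) := intervalIntegrable_const
  have key : ‖(∫ u in t..(t+h), F u) - h • F t‖ ≤ (ε/2) * h := by
    have heq : (∫ u in t..(t+h), F u) - h • F t = ∫ u in t..(t+h), (F u - F t) := by
      rw [intervalIntegral.integral_sub hInt hconst, intervalIntegral.integral_const]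
      congr 2
      ring
    rw [heq]
    have hb := intervalIntegral.norm_integral_le_of_norm_le_const (C := ε/2)
      (f := fun u => F u - F t) (a := t) (b := t+h) ?_
    · calc ‖∫ u in t..(t+h), (F u - F t)‖ ≤ (ε/2) * |t + h - t| := hb
      _ = (ε/2) * h := by rw [show t + h - t = h by ring, abs_of_pos hh]
    · intro x hx
      rw [uIoc_of_le (by linarith)] at hx
      apply le_of_lt
      rw [← dist_eq_norm]
      apply hd
      · exact mem_Ici.mpr (le_trans ht hx.1.le)
      · rw [Real.dist_eq, abs_of_nonneg (by linarith [hx.1.le])]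
        linarith [hx.2]
  rw [dist_eq_norm]
  have hrw : h⁻¹ • (∫ u in t..(t+h), F u) - F t
      = h⁻¹ • ((∫ u in t..(t+h), F u) - h • F t) := by
    rw [smul_sub, smul_smul, inv_mul_cancel₀ hh.ne', one_smul]
  rw [hrw, norm_smul, Real.norm_eq_abs, abs_of_pos (inv_pos.mpr hh)]
  calc h⁻¹ * ‖(∫ u in t..(t+h), F u) - h • F t‖ ≤ h⁻¹ * ((ε/2) * h) := by
        apply mul_le_mul_of_nonneg_left key (by positivity)
  _ = ε/2 := by field_simp
  _ < ε := by linarith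

lemma InDomA_smul {ω p q : ℝ} {β μf : ℝ → ℝ} {x : XX ω} {g g' : ℝ → Fin 3 → ℝ}
    (c : ℝ) (h : InDomA ω p q β μf x g g') :
    InDomA ω p q β μf (c • x) (fun a => c • g a) (fun a => c • g' a) := by
  obtain ⟨hae, hg', hAC, hμg, hbc⟩ := h
  refine ⟨?_, ?_, ?_, ?_, ?_⟩
  · filter_upwards [hae, Lp.coeFn_smul c x] with a ha hsm i
    rw [hsm]
    simp only [Pi.smul_apply, PiLp.smul_apply, smul_eq_mul]
    rw [ha i]
  · exact hg'.smul c
  · intro i a ha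
    simp only [Pi.smul_apply, smul_eq_mul]
    rw [hAC i a ha, mul_add]
    congr 1
    rw [← intervalIntegral.integral_const_mul]
  · have heq : (fun a => fun i => μf a * (c • g a) i)
        = fun a => c • (fun i => μf a * g a i) := by
      funext a i
      simp only [Pi.smul_apply, smul_eq_mul]
      ring
    rw [heq]
    exact hμg.smul c
  · have hBv0 : Bvec ω p q β (fun a => c • g a) 0 = c * Bvec ω p q β g 0 := by
      simp only [Bvec, Matrix.cons_val_zero]
      rw [← integral_const_mul]
      congr 1
      funext a
      simp only [Pi.smul_apply, smul_eq_mul]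
      ring
    have hBv1 : Bvec ω p q β (fun a => c • g a) 1 = c * Bvec ω p q β g 1 := by
      simp only [Bvec, Matrix.cons_val_one, Matrix.head_cons, Matrix.cons_val_zero]
      rw [← integral_const_mul]
      congr 1
      funext a
      simp only [Pi.smul_apply, smul_eq_mul]
      ring
    have hBv2 : Bvec ω p q β (fun a => c • g a) 2 = c * Bvec ω p q β g 2 := by
      simp only [Bvec, Matrix.cons_val_two, Matrix.tail_cons, Matrix.head_cons, Matrix.cons_val_one,
        Matrix.cons_val_zero]
      rw [← integral_const_mul]
      congr 1
      funext a
      simp only [Pi.smul_apply, smul_eq_mul]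
      ring
    have hBv : Bvec ω p q β (fun a => c • g a) = fun i => c * Bvec ω p q β g i := by
      funext i
      fin_cases i
      · exact hBv0
      · exact hBv1
      · exact hBv2
    rw [hBv]
    funext i
    simp only [Pi.smul_apply, smul_eq_mul]
    rw [hbc]

lemma dom_dense {ω p q : ℝ} {β γ δ μf : ℝ → ℝ} {S : ℝ → XX ω →L[ℝ] XX ω}
    (hS : IsGenSemigroup ω p q β γ δ μf S) (ψ : XX ω) {c : ℝ} (hc : 0 < c) :
    ∃ ψ₀ : XX ω, (∃ g g' : ℝ → Fin 3 → ℝ, InDomA ω p q β μf ψ₀ g g') ∧ ‖ψ₀ - ψ‖ < c ∧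
      ∃ Y : XX ω, Tendsto (fun h : ℝ => h⁻¹ • (S h ψ₀ - ψ₀)) (𝓝[>] 0) (𝓝 Y) := by
  obtain ⟨hS0, hSsg, hScont, hSdom, hSval⟩ := hS
  have hFc : ContinuousOn (fun s => S s ψ) (Ici 0) := hScont ψ
  have hII : ∀ a b : ℝ, 0 ≤ a → 0 ≤ b → IntervalIntegrable (fun s => S s ψ) volume a b := by
    intro a b ha hb
    apply ContinuousOn.intervalIntegrable
    apply hFc.mono
    intro x hx
    rcases le_total a b with hab | hab
    · rw [uIcc_of_le hab] at hx
      exact le_trans ha hx.1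
    · rw [uIcc_of_ge hab] at hx
      exact le_trans hb hx.1
  set z : ℝ → XX ω := fun t => ∫ s in (0:ℝ)..t, S s ψ with hz
  have havg0 : Tendsto (fun h : ℝ => h⁻¹ • ∫ u in (0:ℝ)..h, S u ψ) (𝓝[>] 0) (𝓝 ψ) := by
    have l2 := tendsto_avg hFc (t := 0) le_rfl
    simp only [zero_add, hS0, ContinuousLinearMap.one_apply] at l2
    exact l2
  have hkey : ∀ t : ℝ, 0 < t →
      Tendsto (fun h : ℝ => h⁻¹ • (S h (z t) - z t)) (𝓝[>] 0) (𝓝 (S t ψ - ψ)) := by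
    intro t ht
    have heq : ∀ h : ℝ, 0 < h → h < t → S h (z t) - z t
        = (∫ u in t..(t+h), S u ψ) - (∫ u in (0:ℝ)..h, S u ψ) := by
      intro h hh hht
      have h1 : S h (z t) = ∫ s in (0:ℝ)..t, S h (S s ψ) :=
        (ContinuousLinearMap.intervalIntegral_comp_comm (S h) (hII 0 t le_rfl ht.le)).symm
      have h2 : (∫ s in (0:ℝ)..t, S h (S s ψ)) = ∫ s in (0:ℝ)..t, S (h + s) ψ := by
        apply intervalIntegral.integral_congr
        intro s hs
        rw [uIcc_of_le ht.le] at hs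
        show S h (S s ψ) = S (h + s) ψ
        rw [hSsg s h hs.1 hh.le]
        rfl
      have h3 : (∫ s in (0:ℝ)..t, S (h + s) ψ) = ∫ u in h..(h+t), S u ψ := by
        have := intervalIntegral.integral_comp_add_left (a := 0) (b := t)
          (fun u => S u ψ) h
        simpa using this
      have h4 : (∫ u in h..(h+t), S u ψ)
          = (∫ u in h..t, S u ψ) + ∫ u in t..(t+h), S u ψ := by
        rw [intervalIntegral.integral_add_adjacent_intervals (hII h t hh.le ht.le)
          (hII t (t+h) ht.le (by linarith))]
        rw [show h + t = t + h by ring]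
      have h5 : z t = (∫ u in (0:ℝ)..h, S u ψ) + ∫ u in h..t, S u ψ := by
        rw [hz]
        rw [intervalIntegral.integral_add_adjacent_intervals (hII 0 h le_rfl hh.le)
          (hII h t hh.le ht.le)]
      rw [h1, h2, h3, h4, h5]
      abel
    have l1 : Tendsto (fun h : ℝ => h⁻¹ • ∫ u in t..(t+h), S u ψ) (𝓝[>] 0) (𝓝 (S t ψ)) :=
      tendsto_avg hFc ht.le
    apply Tendsto.congr' ?_ (l1.sub havg0)
    filter_upwards [Ioo_mem_nhdsGT_of_mem ⟨le_rfl, ht⟩] with h hh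
    rw [heq h hh.1 hh.2, smul_sub]
  have l3 : Tendsto (fun t : ℝ => t⁻¹ • z t) (𝓝[>] 0) (𝓝 ψ) := havg0
  have hev : ∀ᶠ t in 𝓝[>] (0:ℝ), dist (t⁻¹ • z t) ψ < c := Metric.tendsto_nhds.mp l3 c hc
  obtain ⟨t, hdist, htpos'⟩ := (hev.and self_mem_nhdsWithin).exists
  have htpos : (0:ℝ) < t := htpos'
  refine ⟨t⁻¹ • z t, ?_, by rwa [dist_eq_norm] at hdist, ?_⟩
  · have hlim := hkey t htpos
    obtain ⟨g, g', hd⟩ := (hSdom (z t)).mp ⟨_, hlim⟩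
    exact ⟨fun a => t⁻¹ • g a, fun a => t⁻¹ • g' a, InDomA_smul t⁻¹ hd⟩
  · refine ⟨t⁻¹ • (S t ψ - ψ), ?_⟩
    have hcongr : ∀ h : ℝ, t⁻¹ • (h⁻¹ • (S h (z t) - z t))
        = h⁻¹ • (S h (t⁻¹ • z t) - t⁻¹ • z t) := by
      intro h
      rw [ContinuousLinearMap.map_smul, ← smul_sub, smul_comm]
    exact Tendsto.congr hcongr ((hkey t htpos).const_smul t⁻¹)

lemma deriv_shift {ω : ℝ} {S : ℝ → XX ω →L[ℝ] XX ω}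
    (hS0 : S 0 = 1)
    (hSsg : ∀ s t : ℝ, 0 ≤ s → 0 ≤ t → S (t + s) = (S t).comp (S s))
    {ψ₀ Y₀ : XX ω}
    (hY₀ : Tendsto (fun h : ℝ => h⁻¹ • (S h ψ₀ - ψ₀)) (𝓝[>] 0) (𝓝 Y₀))
    {x : ℝ} (hx : 0 ≤ x) :
    Tendsto (fun h : ℝ => h⁻¹ • (S h (S x ψ₀) - S x ψ₀)) (𝓝[>] 0) (𝓝 (S x Y₀)) := by
  have hcongr : ∀ h : ℝ, 0 < h →
      h⁻¹ • (S h (S x ψ₀) - S x ψ₀) = S x (h⁻¹ • (S h ψ₀ - ψ₀)) := by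
    intro h hh
    rw [ContinuousLinearMap.map_smul, ContinuousLinearMap.map_sub]
    congr 2
    have e1 : S (h + x) = (S h).comp (S x) := hSsg x h hx hh.le
    have e2 : S (x + h) = (S x).comp (S h) := hSsg h x hh.le hx
    calc S h (S x ψ₀) = S (h + x) ψ₀ := by rw [e1]; rfl
    _ = S (x + h) ψ₀ := by rw [add_comm]
    _ = S x (S h ψ₀) := by rw [e2]; rfl
  apply Tendsto.congr' ?_ (((S x).continuous.tendsto Y₀).comp hY₀)
  filter_upwards [self_mem_nhdsWithin] with h hh
  exact (hcongr h hh).symm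

/-! ### Section 6: Gronwall via Dini derivatives, and the Taylor bound for `Φ_ε` -/

lemma gronwall_dini {f : ℝ → ℝ} {b C K A : ℝ} (hC : 0 < C) (hK : 0 ≤ K) (hb : 0 ≤ b)
    (hf : ContinuousOn f (Icc 0 b)) (hA : f 0 ≤ A)
    (hs : ∀ x ∈ Ico 0 b, ∀ r, C * f x + K < r → ∃ᶠ z in 𝓝[>] x, slope f x z < r) :
    f b ≤ (A + K / C) * Real.exp (C * b) := by
  have main : ∀ η : ℝ, 0 < η →
      f b ≤ (A + η + (K + η)/C) * Real.exp (C * b) - (K + η)/C := by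
    intro η hη
    set B : ℝ → ℝ := fun x => (A + η + (K + η)/C) * Real.exp (C * x) - (K + η)/C with hB
    have hB' : ∀ x, HasDerivAt B (C * B x + (K + η)) x := by
      intro x
      have h1 : HasDerivAt (fun y : ℝ => Real.exp (C * y)) (C * Real.exp (C * x)) x := by
        have := (Real.hasDerivAt_exp (C * x)).comp x ((hasDerivAt_id x).const_mul C)
        simpa [mul_comm, Function.comp_def] using this
      have h2 := (h1.const_mul (A + η + (K + η)/C)).sub_const ((K + η)/C)
      refine h2.congr_deriv ?_
      rw [hB]
      field_simp
      ring
    have := image_le_of_liminf_slope_right_lt_deriv_boundary (f := f)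
      (f' := fun x => C * f x + K) (a := 0) (b := b) hf hs
      (B := B) (B' := fun x => C * B x + (K + η)) ?_ hB' ?_ (mem_Icc.mpr ⟨hb, le_rfl⟩)
    · exact this
    · rw [hB]
      simp only [mul_zero, Real.exp_zero, mul_one]
      linarith
    · intro x _ hfx
      show C * f x + K < C * B x + (K + η)
      rw [hfx]
      linarith
  apply le_of_forall_pos_le_add
  intro c hc
  have he : 0 < Real.exp (C * b) := Real.exp_pos _
  have h1C : (0:ℝ) < 1 + 1/C := by positivity
  set M : ℝ := (1 + 1/C) * Real.exp (C * b) with hM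
  have hM0 : 0 < M := by positivity
  have h := main (c / M) (by positivity)
  have hM' : (c / M) * M = c := div_mul_cancel₀ c hM0.ne'
  have expand : (A + c/M + (K + c/M)/C) * Real.exp (C * b)
      = (A + K/C) * Real.exp (C * b) + (c/M) * ((1 + 1/C) * Real.exp (C * b)) := by
    field_simp
    ring
  rw [expand, ← hM, hM'] at h
  have h1 : (0:ℝ) ≤ (K + c/M)/C := by positivity
  linarith

lemma rmin_scale {ε h y : ℝ} (hh : 0 < h) :
    min (2*|h*y|) ((h*y)^2/ε) = h * min (2*|y|) (h*y^2/ε) := by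
  rw [abs_mul, abs_of_pos hh]
  have e : (h*y)^2/ε = h*(h*y^2/ε) := by ring
  have e2 : 2*(h*|y|) = h*(2*|y|) := by ring
  rcases le_total (2*|y|) (h*y^2/ε) with hc | hc
  · have h2 := mul_le_mul_of_nonneg_left hc hh.le
    rw [min_eq_left hc, min_eq_left (by linarith)]
    ring
  · have h2 := mul_le_mul_of_nonneg_left hc hh.le
    rw [min_eq_right hc, min_eq_right (by linarith)]
    ring

lemma integrable_sum_nphi_mul {ω ε : ℝ} (u Y : XX ω) :
    Integrable (fun a => ∑ i, nphi ε (u a i) * Y a i) (muM ω) := by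
  apply Integrable.mono' (f := fun a => ∑ i, nphi ε (u a i) * Y a i)
    (g := fun a => ∑ i, |Y a i|)
    (integrable_finset_sum _ fun i _ => (comp_integrable Y i).abs)
  · exact Finset.aestronglyMeasurable_fun_sum _ fun i _ =>
      ((nphi_continuous ε).comp_aestronglyMeasurable (comp_aesm u i)).mul (comp_aesm Y i)
  · filter_upwards with a
    rw [Real.norm_eq_abs]
    calc |∑ i, nphi ε (u a i) * Y a i| ≤ ∑ i, |nphi ε (u a i) * Y a i| :=
      Finset.abs_sum_le_sum_abs _ _
    _ ≤ ∑ i, |Y a i| := by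
        apply Finset.sum_le_sum
        intro i _
        rw [abs_mul]
        calc |nphi ε (u a i)| * |Y a i| ≤ 1 * |Y a i| :=
          mul_le_mul_of_nonneg_right (abs_nphi_le ε _) (abs_nonneg _)
        _ = |Y a i| := one_mul _

lemma integrable_sum_rmin {ω ε h : ℝ} (hε : 0 < ε) (hh : 0 ≤ h) (Y : XX ω) :
    Integrable (fun a => ∑ i, min (2*|Y a i|) (h * (Y a i)^2 / ε)) (muM ω) := by
  apply Integrable.mono' (f := fun a => ∑ i, min (2*|Y a i|) (h * (Y a i)^2 / ε))
    (g := fun a => ∑ i, 2 * |Y a i|)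
    (integrable_finset_sum _ fun i _ => ((comp_integrable Y i).abs.const_mul 2))
  · apply Finset.aestronglyMeasurable_fun_sum _ fun i _ => ?_
    have hcont : Continuous fun y : ℝ => min (2*|y|) (h * y^2 / ε) := by
      apply Continuous.min
      · exact continuous_const.mul continuous_abs
      · exact (continuous_const.mul (continuous_pow 2)).div_const ε
    exact hcont.comp_aestronglyMeasurable (comp_aesm Y i)
  · filter_upwards with a
    rw [Real.norm_eq_abs]
    calc |∑ i, min (2*|Y a i|) (h * (Y a i)^2 / ε)| ≤ ∑ i, |min (2*|Y a i|) (h * (Y a i)^2 / ε)| :=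
      Finset.abs_sum_le_sum_abs _ _
    _ ≤ ∑ i, 2 * |Y a i| := by
        apply Finset.sum_le_sum
        intro i _
        rw [abs_of_nonneg (le_min (by positivity)
          (div_nonneg (mul_nonneg hh (sq_nonneg _)) hε.le))]
        exact min_le_left _ _

lemma PhiE_taylor {ω ε : ℝ} (hε : 0 < ε) (u Y : XX ω) {h : ℝ} (hh : 0 < h) :
    PhiE ω ε (u + h • Y) - PhiE ω ε u
      ≤ h * (∫ a, (∑ i, nphi ε (u a i) * Y a i) ∂(muM ω))
        + h * ∫ a, (∑ i, min (2*|Y a i|) (h * (Y a i)^2 / ε)) ∂(muM ω) := by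
  have hstep : PhiE ω ε (u + h • Y) - PhiE ω ε u
      ≤ ∫ a, (h * (∑ i, nphi ε (u a i) * Y a i)
          + h * (∑ i, min (2*|Y a i|) (h * (Y a i)^2 / ε))) ∂(muM ω) := by
    rw [PhiE, PhiE, ← integral_sub (integrable_sum_pphi hε _) (integrable_sum_pphi hε u)]
    apply integral_mono_ae
    · exact (integrable_sum_pphi hε _).sub (integrable_sum_pphi hε u)
    · exact ((integrable_sum_nphi_mul u Y).const_mul h).add
        ((integrable_sum_rmin hε hh.le Y).const_mul h)
    · filter_upwards [Lp.coeFn_add u (h • Y), Lp.coeFn_smul h Y] with a ha hsm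
      have hval : ∀ i : Fin 3, (u + h • Y) a i = u a i + h * Y a i := by
        intro i
        rw [ha]
        simp only [Pi.add_apply, PiLp.add_apply]
        congr 1
        rw [hsm]
        simp only [Pi.smul_apply, PiLp.smul_apply, smul_eq_mul]
      have hterm : ∀ i : Fin 3, pphi ε ((u + h • Y) a i) - pphi ε (u a i)
          ≤ h * (nphi ε (u a i) * Y a i) + h * min (2*|Y a i|) (h * (Y a i)^2 / ε) := by
        intro i
        rw [hval i]
        have := pphi_taylor_min hε (u a i) (h * Y a i)
        rw [rmin_scale hh] at this
        nlinarith [this]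
      calc (∑ i, pphi ε ((u + h • Y) a i)) - ∑ i, pphi ε (u a i)
          = ∑ i : Fin 3, (pphi ε ((u + h • Y) a i) - pphi ε (u a i)) := by
            rw [Finset.sum_sub_distrib]
      _ ≤ ∑ i : Fin 3, (h * (nphi ε (u a i) * Y a i)
            + h * min (2*|Y a i|) (h * (Y a i)^2 / ε)) :=
          Finset.sum_le_sum fun i _ => hterm i
      _ = h * (∑ i, nphi ε (u a i) * Y a i)
            + h * (∑ i, min (2*|Y a i|) (h * (Y a i)^2 / ε)) := by
          rw [Finset.sum_add_distrib, Finset.mul_sum, Finset.mul_sum]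
  calc PhiE ω ε (u + h • Y) - PhiE ω ε u
      ≤ ∫ a, (h * (∑ i, nphi ε (u a i) * Y a i)
          + h * (∑ i, min (2*|Y a i|) (h * (Y a i)^2 / ε))) ∂(muM ω) := hstep
  _ = h * (∫ a, (∑ i, nphi ε (u a i) * Y a i) ∂(muM ω))
        + h * ∫ a, (∑ i, min (2*|Y a i|) (h * (Y a i)^2 / ε)) ∂(muM ω) := by
      rw [integral_add ((integrable_sum_nphi_mul u Y).const_mul h)
        ((integrable_sum_rmin hε hh.le Y).const_mul h), integral_const_mul, integral_const_mul]

lemma tendsto_rmin_integral {ω ε : ℝ} (hε : 0 < ε) (Y : XX ω) :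
    Tendsto (fun h : ℝ => ∫ a, (∑ i, min (2*|Y a i|) (h * (Y a i)^2 / ε)) ∂(muM ω))
      (𝓝[>] 0) (𝓝 0) := by
  have key := tendsto_integral_filter_of_dominated_convergence (μ := muM ω)
    (l := 𝓝[>] (0:ℝ))
    (F := fun h a => ∑ i, min (2*|Y a i|) (h * (Y a i)^2 / ε))
    (f := fun _ => (0:ℝ)) (bound := fun a => ∑ i, 2 * |Y a i|) ?_ ?_ ?_ ?_
  · simpa using key
  · filter_upwards with h
    apply Finset.aestronglyMeasurable_fun_sum _ fun i _ => ?_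
    have hcont : Continuous fun y : ℝ => min (2*|y|) (h * y^2 / ε) := by
      apply Continuous.min
      · exact continuous_const.mul continuous_abs
      · exact (continuous_const.mul (continuous_pow 2)).div_const ε
    exact hcont.comp_aestronglyMeasurable (comp_aesm Y i)
  · filter_upwards [self_mem_nhdsWithin] with h hh
    filter_upwards with a
    rw [mem_Ioi] at hh
    rw [Real.norm_eq_abs, abs_of_nonneg]
    · apply Finset.sum_le_sum
      intro i _
      exact min_le_left _ _
    · apply Finset.sum_nonneg
      intro i _
      exact le_min (by positivity) (div_nonneg (mul_nonneg hh.le (sq_nonneg _)) hε.le)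
  · exact integrable_finset_sum _ fun i _ => ((comp_integrable Y i).abs.const_mul 2)
  · filter_upwards with a
    have : Tendsto (fun h : ℝ => ∑ i : Fin 3, min (2*|Y a i|) (h * (Y a i)^2 / ε))
        (𝓝 0) (𝓝 (∑ i : Fin 3, min (2*|Y a i|) (0 * (Y a i)^2 / ε))) := by
      apply tendsto_finset_sum
      intro i _
      apply Tendsto.min tendsto_const_nhds
      exact (tendsto_id.mul_const _).div_const ε
    have hz : (∑ i : Fin 3, min (2*|Y a i|) ((0:ℝ) * (Y a i)^2 / ε)) = 0 := by
      apply Finset.sum_eq_zero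
      intro i _
      rw [zero_mul, zero_div]
      exact min_eq_right (by positivity)
    rw [hz] at this
    exact this.mono_left nhdsWithin_le_nhds


/-! ### Section 7: the decay estimate along the semigroup, and the main theorem -/

lemma decay_est {ω p q : ℝ} (hω : 0 < ω) {β γ δ μf : ℝ → ℝ} {Mβ Mγ Mδ : ℝ}
    (hβm : Measurable β)
    (hβ : ∀ᵐ a ∂(muM ω), 0 ≤ β a ∧ β a ≤ Mβ)
    (hγ : ∀ᵐ a ∂(muM ω), 0 ≤ γ a ∧ γ a ≤ Mγ)
    (hδ : ∀ᵐ a ∂(muM ω), 0 ≤ δ a ∧ δ a ≤ Mδ)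
    (hμ : ∀ᵐ a ∂(muM ω), 0 ≤ μf a)
    (hp : p ∈ Icc (0:ℝ) 1) (hq : q ∈ Icc (0:ℝ) 1)
    {S : ℝ → XX ω →L[ℝ] XX ω} (hS : IsGenSemigroup ω p q β γ δ μf S)
    {ψ₀ Y₀ : XX ω}
    (hY₀ : Tendsto (fun h : ℝ => h⁻¹ • (S h ψ₀ - ψ₀)) (𝓝[>] 0) (𝓝 Y₀))
    {ε : ℝ} (hε : 0 < ε) {t : ℝ} (ht : 0 ≤ t)
    (hC : 0 < 3*Mβ + Mγ + Mδ) :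
    PhiE ω ε (S t ψ₀) ≤ (PhiE ω ε ψ₀ + 3*ω*ε) * Real.exp ((3*Mβ + Mγ + Mδ) * t) := by
  obtain ⟨hS0, hSsg, hScont, hSdom, hSval⟩ := hS
  set C := 3*Mβ + Mγ + Mδ with hCdef
  set K := C * (3*ω*ε) with hKdef
  have hK0 : 0 ≤ K := mul_nonneg hC.le (by positivity)
  set f : ℝ → ℝ := fun x => PhiE ω ε (S x ψ₀) with hfdef
  have hfc : ContinuousOn f (Icc 0 t) := by
    apply (PhiE_continuous hε).comp_continuousOn
    apply (hScont ψ₀).mono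
    intro x hx
    exact hx.1
  have hslope : ∀ x ∈ Ico 0 t, ∀ r, C * f x + K < r → ∃ᶠ z in 𝓝[>] x, slope f x z < r := by
    intro x hx r hr
    have hfx : f x = PhiE ω ε (S x ψ₀) := rfl
    have hux : Tendsto (fun h : ℝ => h⁻¹ • (S h (S x ψ₀) - S x ψ₀)) (𝓝[>] 0)
        (𝓝 (S x Y₀)) := deriv_shift hS0 hSsg hY₀ hx.1
    obtain ⟨g, g', hdom⟩ := (hSdom (S x ψ₀)).mp ⟨_, hux⟩
    have hYv := hSval (S x ψ₀) (S x Y₀) g g' hdom hux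
    have hcore := core_est hω hβm hβ hγ hδ hμ hp hq hε (S x ψ₀) (S x Y₀) g g' hdom hYv
    have hIle : (∫ a, (∑ i, nphi ε ((S x ψ₀) a i) * (S x Y₀) a i) ∂(muM ω))
        ≤ C * f x + K := by
      have h1 : Phi0 ω (S x ψ₀) ≤ PhiE ω ε (S x ψ₀) + 3*ε*ω := Phi0_le_PhiE_add hω hε _
      calc (∫ a, (∑ i, nphi ε ((S x ψ₀) a i) * (S x Y₀) a i) ∂(muM ω))
          ≤ C * Phi0 ω (S x ψ₀) := hcore
      _ ≤ C * (f x + 3*ε*ω) := by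
          apply mul_le_mul_of_nonneg_left _ hC.le
          rw [hfx]
          linarith
      _ = C * f x + K := by rw [hKdef]; ring
    have he1 : Tendsto (fun h : ℝ => ‖h⁻¹ • (S h (S x ψ₀) - S x ψ₀) - S x Y₀‖)
        (𝓝[>] 0) (𝓝 0) := by
      have h1 := hux.sub (tendsto_const_nhds (x := S x Y₀))
      rw [sub_self] at h1
      have h2 := h1.norm
      simpa using h2
    have hQ := tendsto_rmin_integral hε (S x Y₀)
    have hsum := he1.add hQ
    rw [add_zero] at hsum
    have hev : ∀ᶠ h in 𝓝[>] (0:ℝ), f (x + h) - f x < h * r := by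
      have hevs : ∀ᶠ h in 𝓝[>] (0:ℝ),
          ‖h⁻¹ • (S h (S x ψ₀) - S x ψ₀) - S x Y₀‖
            + (∫ a, (∑ i, min (2*|(S x Y₀) a i|) (h * ((S x Y₀) a i)^2 / ε)) ∂(muM ω))
            < r - (C * f x + K) := by
        have h3 := Metric.tendsto_nhds.mp hsum (r - (C * f x + K)) (by linarith)
        filter_upwards [h3] with h hh
        rw [Real.dist_eq, sub_zero] at hh
        exact lt_of_le_of_lt (le_abs_self _) hh
      filter_upwards [hevs, self_mem_nhdsWithin] with h hhe hh0
      replace hh0 : 0 < h := hh0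
      have hquot : S (x + h) ψ₀ = S h (S x ψ₀) := by
        rw [add_comm, hSsg x h hx.1 hh0.le]
        rfl
      have hTay := PhiE_taylor hε (S x ψ₀) (S x Y₀) hh0
      set E1 := ‖h⁻¹ • (S h (S x ψ₀) - S x ψ₀) - S x Y₀‖ with hE1def
      set I := ∫ a, (∑ i, nphi ε ((S x ψ₀) a i) * (S x Y₀) a i) ∂(muM ω) with hIdef
      set Qh := ∫ a, (∑ i, min (2*|(S x Y₀) a i|) (h * ((S x Y₀) a i)^2 / ε)) ∂(muM ω)
        with hQdef
      have hnorm : ‖S h (S x ψ₀) - (S x ψ₀ + h • (S x Y₀))‖ = h * E1 := by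
        have hrw : S h (S x ψ₀) - (S x ψ₀ + h • (S x Y₀))
            = h • (h⁻¹ • (S h (S x ψ₀) - S x ψ₀) - S x Y₀) := by
          rw [smul_sub, smul_smul, mul_inv_cancel₀ hh0.ne', one_smul]
          abel
        rw [hrw, norm_smul, Real.norm_eq_abs, abs_of_pos hh0, hE1def]
      have hLip : PhiE ω ε (S (x+h) ψ₀) - PhiE ω ε (S x ψ₀ + h • (S x Y₀)) ≤ h * E1 := by
        have h1 := PhiE_sub_le hε (S (x+h) ψ₀) (S x ψ₀ + h • (S x Y₀))
        rw [hquot, hnorm] at h1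
        rw [← hquot] at h1
        exact h1
      have hmulI : h * I ≤ h * (C * f x + K) := mul_le_mul_of_nonneg_left hIle hh0.le
      have hmul2 : h * (E1 + Qh) < h * (r - (C * f x + K)) := mul_lt_mul_of_pos_left hhe hh0
      have hfxh : f (x + h) = PhiE ω ε (S (x+h) ψ₀) := rfl
      rw [hfxh, hfx]
      nlinarith [hTay, hLip, hmulI, hmul2]
    rw [Filter.eventually_iff, mem_nhdsGT_iff_exists_Ioo_subset] at hev
    obtain ⟨d', hd'mem, hsub⟩ := hev
    rw [mem_Ioi] at hd'mem
    apply Filter.Eventually.frequently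
    rw [Filter.eventually_iff]
    apply mem_of_superset (Ioo_mem_nhdsGT_of_mem
      (⟨le_rfl, by linarith⟩ : x ∈ Ico x (x + d')))
    intro z hz
    have hhz : z - x ∈ Ioo (0:ℝ) d' := ⟨by linarith [hz.1], by linarith [hz.2]⟩
    have hval := hsub hhz
    rw [mem_setOf_eq] at hval
    rw [mem_setOf_eq, slope_def_field, div_lt_iff₀ (by linarith [hz.1] : (0:ℝ) < z - x)]
    have hxz : x + (z - x) = z := by ring
    rw [hxz] at hval
    linarith
  have hgron := gronwall_dini hC hK0 ht hfc (le_refl (f 0)) hslope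
  have hf0 : f 0 = PhiE ω ε ψ₀ := by
    rw [hfdef]
    simp only [hS0, ContinuousLinearMap.one_apply]
  have hKC : K / C = 3*ω*ε := by
    rw [hKdef]
    field_simp
  rw [hf0, hKC] at hgron
  exact hgron


/-- under (H1), (H2) and `p,q ∈ [0,1]`, the `C₀`-semigroup `(S(t))_{t≥0}`
generated by `A` is positive: `S(t)X⁺ ⊆ X⁺` for every `t ≥ 0`. -/
theorem semigroup_positive (ω : ℝ) (hω : 0 < ω)
    (β γ δ μf : ℝ → ℝ) (β₀ γ₀ δ₀ μ₀ : ℝ)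
    (hβmeas : Measurable β) (hMβ : ∃ Mβ, IsEssSupOn ω β Mβ)
    (hβ₀ : IsEssInfOn ω β β₀) (hβ₀pos : 0 < β₀)
    (hγmeas : Measurable γ) (hMγ : ∃ Mγ, IsEssSupOn ω γ Mγ)
    (hγ₀ : IsEssInfOn ω γ γ₀) (hγ₀pos : 0 < γ₀)
    (hδmeas : Measurable δ) (hMδ : ∃ Mδ, IsEssSupOn ω δ Mδ)
    (hδ₀ : IsEssInfOn ω δ δ₀) (hδ₀pos : 0 < δ₀)
    (hμmeas : Measurable μf)
    (hμloc : ∀ b : ℝ, 0 ≤ b → b < ω → IntegrableOn μf (Icc 0 b))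
    (hμ₀ : IsEssInfOn ω μf μ₀) (hμ₀pos : 0 < μ₀)
    (hμinf : ∫⁻ a in Icc (0:ℝ) ω, ENNReal.ofReal (μf a) = ⊤)
    (p q : ℝ) (hp : p ∈ Icc (0:ℝ) 1) (hq : q ∈ Icc (0:ℝ) 1)
    (S : ℝ → XX ω →L[ℝ] XX ω) (hS : IsGenSemigroup ω p q β γ δ μf S) :
    ∀ t : ℝ, 0 ≤ t → ∀ ψ ∈ Xpos ω, S t ψ ∈ Xpos ω := by
  obtain ⟨Mb, hMb⟩ := hMβ
  obtain ⟨Mg, hMg⟩ := hMγ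
  obtain ⟨Md, hMd⟩ := hMδ
  -- a.e. bounds
  have hβae : ∀ᵐ a ∂(muM ω), 0 ≤ β a ∧ β a ≤ Mb := by
    filter_upwards [hβ₀.1, hMb.1] with a h1 h2
    exact ⟨by linarith, (le_abs_self _).trans h2⟩
  have hγae : ∀ᵐ a ∂(muM ω), 0 ≤ γ a ∧ γ a ≤ Mg := by
    filter_upwards [hγ₀.1, hMg.1] with a h1 h2
    exact ⟨by linarith, (le_abs_self _).trans h2⟩
  have hδae : ∀ᵐ a ∂(muM ω), 0 ≤ δ a ∧ δ a ≤ Md := by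
    filter_upwards [hδ₀.1, hMd.1] with a h1 h2
    exact ⟨by linarith, (le_abs_self _).trans h2⟩
  have hμae : ∀ᵐ a ∂(muM ω), 0 ≤ μf a := by
    filter_upwards [hμ₀.1] with a h1
    linarith
  -- positivity of the constants
  have hMb0 : 0 < Mb := by
    have : β₀ ≤ Mb := ae_le_const_of_ae hω (by
      filter_upwards [hβ₀.1, hMb.1] with a h1 h2
      exact h1.trans ((le_abs_self _).trans h2))
    linarith
  have hMg0 : 0 ≤ Mg := ae_le_const_of_ae hω (hγae.mono fun a h => h.1.trans h.2)
  have hMd0 : 0 ≤ Md := ae_le_const_of_ae hω (hδae.mono fun a h => h.1.trans h.2)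
  have hCpos : 0 < 3*Mb + Mg + Md := by linarith
  intro t ht ψ hψ
  apply xpos_of_Phi0_zero
  have hPhi0 : Phi0 ω (S t ψ) ≤ 0 := by
    apply le_of_forall_pos_le_add
    intro c hc
    rw [zero_add]
    set N := ‖S t‖ with hN
    have hN0 : (0:ℝ) ≤ N := norm_nonneg _
    set E := Real.exp ((3*Mb + Mg + Md) * t) with hE
    have hE1 : (1:ℝ) ≤ E := by
      rw [hE]
      exact Real.one_le_exp (by positivity)
    have hE0 : (0:ℝ) < E := by linarith
    set D := E + N + 1 with hDdef
    have hD0 : (0:ℝ) < D := by rw [hDdef]; linarith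
    have hd0 : (0:ℝ) < c/(4*D) := by positivity
    obtain ⟨ψ₀, _hdom0, hnear, Y₀, hY₀⟩ := dom_dense hS ψ hd0
    have hε'0 : (0:ℝ) < c/(12*ω*D) := by positivity
    set d := c/(4*D) with hd
    set ε' := c/(12*ω*D) with hε'
    have hgr := decay_est hω hβmeas hβae hγae hδae hμae hp hq hS hY₀ hε'0 ht hCpos
    -- comparisons
    have l1 : Phi0 ω (S t ψ) ≤ Phi0 ω (S t ψ₀) + N * d := by
      have hPl := Phi0_sub_le (S t ψ) (S t ψ₀)
      have hno : ‖S t ψ - S t ψ₀‖ ≤ N * d := by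
        rw [← map_sub]
        calc ‖S t (ψ - ψ₀)‖ ≤ N * ‖ψ - ψ₀‖ := (S t).le_opNorm _
        _ ≤ N * d := by
            apply mul_le_mul_of_nonneg_left _ hN0
            rw [norm_sub_rev]
            exact hnear.le
      linarith
    have l2 : Phi0 ω (S t ψ₀) ≤ PhiE ω ε' (S t ψ₀) + 3*ε'*ω :=
      Phi0_le_PhiE_add hω hε'0 _
    have l3 : PhiE ω ε' ψ₀ ≤ d := by
      have h1 : PhiE ω ε' ψ₀ ≤ Phi0 ω ψ₀ := PhiE_le_Phi0 hε'0 _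
      have h2 := Phi0_sub_le ψ₀ ψ
      rw [Phi0_zero_of_xpos hψ] at h2
      linarith [hnear.le]
    have l4 : PhiE ω ε' (S t ψ₀) ≤ (d + 3*ω*ε') * E := by
      calc PhiE ω ε' (S t ψ₀) ≤ (PhiE ω ε' ψ₀ + 3*ω*ε') * E := hgr
      _ ≤ (d + 3*ω*ε') * E := by
          apply mul_le_mul_of_nonneg_right _ hE0.le
          linarith
    have hDne : D ≠ 0 := hD0.ne'
    have hdD : d * D = c/4 := by
      rw [hd]
      field_simp
    have hεD : (3*ω*ε') * D = c/4 := by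
      rw [hε']
      field_simp
      ring
    have k0 : (d + 3*ω*ε')*E + 3*ε'*ω + N*d = (d*E + N*d) + ((3*ω*ε')*E + 3*ε'*ω) := by
      ring
    have k1 : d*E + N*d = d*D - d := by rw [hDdef]; ring
    have k2 : (3*ω*ε')*E + 3*ε'*ω = (3*ω*ε')*D - (3*ω*ε')*N := by rw [hDdef]; ring
    have k3 : (0:ℝ) ≤ (3*ω*ε')*N := by positivity
    have k4 : (0:ℝ) < d := hd0
    calc Phi0 ω (S t ψ) ≤ (d + 3*ω*ε')*E + 3*ε'*ω + N*d := by linarith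
    _ ≤ c := by linarith
  exact le_antisymm hPhi0 (Phi0_nonneg _)

end
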